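/- arXiv:2302.02190 — 4 statements merged into one kernel-verified Lean document; each statement's English description precedes it below -/
import Mathlib

section
/- Let G be a graph and D an orientation of G such that for every odd (undirected) cycle C of G there is a vertex u ∈ V(C) that is simplicial in G and satisfies d⁺_D(u) = 0. If L(v) is a list of d⁺_D(v) + 1 positive integers for each vertex v, then there is an additive coloring of G assigning to each v an element of L(v). -/
open Finset MvPolynomial

/-- Out-degree of `v` in the digraph with arc set `S`. -/
def outDeg {α : Type*} [DecidableEq α] (S : Finset (α × α)) (v : α) : ℕ :=
  (S.filter fun p => p.1 = v).card

/-- In-degree of `v` in the digraph with arc set `S`. -/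
def inDeg {α : Type*} [DecidableEq α] (S : Finset (α × α)) (v : α) : ℕ :=
  (S.filter fun p => p.2 = v).card

/-- A digraph (arc set) is Eulerian if every vertex has equal in- and out-degree. -/
def IsEulerian {α : Type*} [DecidableEq α] (S : Finset (α × α)) : Prop :=
  ∀ v, outDeg S v = inDeg S v

instance {α : Type*} [DecidableEq α] [Fintype α] (S : Finset (α × α)) :
    Decidable (IsEulerian S) := by
  unfold IsEulerian; infer_instance

/-- Number of spanning Eulerian subdigraphs of `H` with an even number of edges. -/
def EE {α : Type*} [DecidableEq α] [Fintype α] (H : Finset (α × α)) : ℕ :=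
  (H.powerset.filter fun S => IsEulerian S ∧ Even S.card).card

/-- Number of spanning Eulerian subdigraphs of `H` with an odd number of edges. -/
def EO {α : Type*} [DecidableEq α] [Fintype α] (H : Finset (α × α)) : ℕ :=
  (H.powerset.filter fun S => IsEulerian S ∧ Odd S.card).card

/-- A digraph `H` contains a directed cycle of length `n`. -/
def HasDicycleLen {α : Type*} (H : Finset (α × α)) (n : ℕ) : Prop :=
  0 < n ∧ ∃ c : ZMod n → α, Function.Injective c ∧ ∀ i, (c i, c (i + 1)) ∈ H

/-- `A` is an orientation of the simple graph `G`. -/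
def IsOrientation {V : Type*} (G : SimpleGraph V) (A : Finset (V × V)) : Prop :=
  (∀ v w, G.Adj v w ↔ ((v, w) ∈ A ∨ (w, v) ∈ A)) ∧
  (∀ v w, (v, w) ∈ A → (w, v) ∉ A)

/-- Neighborhood `N_D(v)` in the digraph with arc set `A` (neighbors in either direction). -/
def nbr {V : Type*} [Fintype V] [DecidableEq V] (A : Finset (V × V)) (v : V) : Finset V :=
  Finset.univ.filter fun x => (v, x) ∈ A ∨ (x, v) ∈ A

/-- Closed neighborhood `N_D[v]`. -/
def nbrC {V : Type*} [Fintype V] [DecidableEq V] (A : Finset (V × V)) (v : V) : Finset V :=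
  insert v (nbr A v)

/-- Vertex type of `W(D)`: starred vertices `x*`, sector vertices `x^{vw}`,
and middle vertices `y^{vw}_x`. -/
abbrev WV (V : Type*) := V ⊕ ((V × V) × V) ⊕ ((V × V) × V)


instance {V : Type*} [DecidableEq V] : DecidableEq (WV V) :=
  inferInstanceAs (DecidableEq (V ⊕ ((V × V) × V) ⊕ ((V × V) × V)))

instance {V : Type*} [Fintype V] [DecidableEq V] : Fintype (WV V) :=
  inferInstanceAs (Fintype (V ⊕ ((V × V) × V) ⊕ ((V × V) × V)))

/-- The starred vertex `x*`. -/
def vstar {V : Type*} (x : V) : WV V := Sum.inl x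

/-- The sector vertex `x^{vw}` (for `e = (v,w)`). -/
def vsec {V : Type*} (e : V × V) (x : V) : WV V := Sum.inr (Sum.inl (e, x))

/-- The middle vertex `y^{vw}_x` (for `e = (v,w)`). -/
def vmid {V : Type*} (e : V × V) (x : V) : WV V := Sum.inr (Sum.inr (e, x))

/-- The set `N_D[v] △ N_D(w)` of possible endpoints of γ-paths through the `vw`-sector. -/
def gammaEnds {V : Type*} [Fintype V] [DecidableEq V] (A : Finset (V × V)) (e : V × V) :
    Finset V :=
  (nbrC A e.1 ∪ nbr A e.2) \ (nbrC A e.1 ∩ nbr A e.2)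

/-- The arc set of the digraph `W(D)` built from the digraph with arc set `A`. -/
def WArcSet {V : Type*} [Fintype V] [DecidableEq V] (A : Finset (V × V)) :
    Finset (WV V × WV V) :=
  (A.image fun e => (vstar e.1, vsec e e.1)) ∪
  (A.biUnion fun e => (nbr A e.1 \ nbr A e.2).image fun x => (vsec e e.1, vsec e x)) ∪
  (A.biUnion fun e => (nbr A e.2 \ nbrC A e.1).image fun x => (vsec e e.1, vmid e x)) ∪
  (A.biUnion fun e => (nbr A e.2 \ nbrC A e.1).image fun x => (vmid e x, vsec e x)) ∪
  (A.biUnion fun e => (gammaEnds A e).image fun x => (vsec e x, vstar x))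

/-- The γ-path `P(v,w;x)` from `v*` through the `vw`-sector to `x*`, as a set of arcs. -/
def gammaPath {V : Type*} [Fintype V] [DecidableEq V] (A : Finset (V × V)) (e : V × V)
    (x : V) : Finset (WV V × WV V) :=
  if x ∈ nbr A e.2 \ nbrC A e.1 then
    {(vstar e.1, vsec e e.1), (vsec e e.1, vmid e x), (vmid e x, vsec e x), (vsec e x, vstar x)}
  else
    {(vstar e.1, vsec e e.1), (vsec e e.1, vsec e x), (vsec e x, vstar x)}

/-- `ℓ` is an additive coloring of `G`. -/
def IsAdditiveColoring {V : Type*} [Fintype V] [DecidableEq V] (G : SimpleGraph V)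
    [DecidableRel G.Adj] (ℓ : V → ℕ) : Prop :=
  ∀ v w, G.Adj v w →
    ∑ u ∈ G.neighborFinset v, ℓ u ≠ ∑ u ∈ G.neighborFinset w, ℓ u

set_option linter.unusedSectionVars false

section Aux
open SimpleGraph

section arcs
variable {V : Type*} [Fintype V] [DecidableEq V]

/-- tail of arc `a` is `a.1.1`, head is `a.2`. -/
def outC (R : Finset ((V × V) × V)) (u : V) : ℕ := (R.filter fun a => a.1.1 = u).card
def inC (R : Finset ((V × V) × V)) (u : V) : ℕ := (R.filter fun a => a.2 = u).card

def TrailFrom : List ((V × V) × V) → V → V → Prop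
  | [], t, s => t = s
  | b :: l, t, s => b.1.1 = t ∧ TrailFrom l b.2 s

lemma filter_card_insert {α : Type*} [DecidableEq α] (p : α → Prop) [DecidablePred p]
    {F : Finset α} {b : α} (hb : b ∉ F) :
    ((insert b F).filter p).card = (F.filter p).card + if p b then 1 else 0 := by
  rw [Finset.filter_insert]
  split
  · rw [Finset.card_insert_of_notMem (fun hm => hb (Finset.mem_of_mem_filter _ hm))]
  · rw [add_zero]

lemma outC_insert {R : Finset ((V × V) × V)} {b} (hb : b ∉ R) (u : V) :
    outC (insert b R) u = outC R u + if b.1.1 = u then 1 else 0 :=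
  filter_card_insert _ hb

lemma inC_insert {R : Finset ((V × V) × V)} {b} (hb : b ∉ R) (u : V) :
    inC (insert b R) u = inC R u + if b.2 = u then 1 else 0 :=
  filter_card_insert _ hb

lemma trail_bal : ∀ (l : List ((V × V) × V)), l.Nodup → ∀ t s, TrailFrom l t s →
    ∀ u, (outC l.toFinset u : ℤ) - inC l.toFinset u
      = (if u = t then 1 else 0) - (if u = s then 1 else 0) := by
  intro l
  induction l with
  | nil =>
    intro _ t s hts u
    cases hts
    simp [outC, inC]
  | cons b l IH =>
    intro hnd t s htrail u
    obtain ⟨hbt, htrail'⟩ := htrail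
    have hb : b ∉ l.toFinset := by
      simpa using (List.nodup_cons.mp hnd).1
    have hIH := IH (List.nodup_cons.mp hnd).2 b.2 s htrail' u
    rw [List.toFinset_cons]
    rw [outC_insert hb, inC_insert hb]
    push_cast
    subst hbt
    by_cases h1 : u = b.1.1 <;> by_cases h2 : u = s <;> by_cases h3 : u = b.2 <;>
      simp [h1, h2, h3, eq_comm] at hIH ⊢ <;> omega
end arcs

section arcs2
variable {V : Type*} [Fintype V] [DecidableEq V]

lemma exists_trail (s : V) :
    ∀ (R : Finset ((V × V) × V)), ∀ t : V,
    (∀ u, (outC R u : ℤ) - inC R u = (if u = t then 1 else 0) - (if u = s then 1 else 0)) →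
    ∃ l : List ((V × V) × V), l.Nodup ∧ (∀ b ∈ l, b ∈ R) ∧ TrailFrom l t s := by
  intro R
  induction R using Finset.strongInduction with
  | _ R ih =>
    intro t hbal
    by_cases hts : t = s
    · exact ⟨[], List.nodup_nil, by simp, hts⟩
    · have hpos : 0 < outC R t := by
        have := hbal t
        simp [hts] at this
        omega
      obtain ⟨b, hbmem⟩ := Finset.card_pos.mp hpos
      rw [Finset.mem_filter] at hbmem
      obtain ⟨hbR, hbt⟩ := hbmem
      set R' := R.erase b with hR'
      have hbR' : b ∉ R' := Finset.notMem_erase _ _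
      have hins : insert b R' = R := Finset.insert_erase hbR
      have hbal' : ∀ u, (outC R' u : ℤ) - inC R' u
          = (if u = b.2 then 1 else 0) - (if u = s then 1 else 0) := by
        intro u
        have h1 := outC_insert hbR' u
        have h2 := inC_insert hbR' u
        rw [hins] at h1 h2
        have h3 := hbal u
        rw [h1, h2] at h3
        push_cast at h3 ⊢
        subst hbt
        by_cases e1 : u = b.1.1 <;> by_cases e2 : u = s <;> by_cases e3 : u = b.2 <;>
          simp [e1, e2, e3, eq_comm] at h3 ⊢ <;> omega
      obtain ⟨l, hnd, hmem, htr⟩ := ih R' (Finset.erase_ssubset hbR) b.2 hbal'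
      refine ⟨b :: l, ?_, ?_, hbt, htr⟩
      · rw [List.nodup_cons]
        exact ⟨fun hb => (Finset.mem_erase.mp (hmem b hb)).1 rfl, hnd⟩
      · intro x hx
        rcases List.mem_cons.mp hx with rfl | hx
        · exact hbR
        · exact Finset.mem_of_mem_erase (hmem x hx)
end arcs2

variable {V : Type*} [DecidableEq V] {G : SimpleGraph V}

lemma closed_nodup_nil {v : V} (Q : G.Walk v v) (h : Q.support.Nodup) : Q.length = 0 := by
  cases Q with
  | nil => rfl
  | cons h' Q' =>
    exfalso
    rw [Walk.support_cons] at h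
    exact (List.nodup_cons.mp h).1 Q'.end_mem_support

lemma path_edge_end {w v : V} (P : G.Walk w v) (hnd : P.support.Nodup)
    (he : s(v, w) ∈ P.edges) : P.length = 1 := by
  cases P with
  | nil => simp at he
  | @cons _ z _ h' Q =>
    rw [Walk.edges_cons, List.mem_cons] at he
    rw [Walk.support_cons] at hnd
    rcases he with he | he
    · have hz : z = v := by
        rw [Sym2.eq_iff] at he
        rcases he with ⟨h1, h2⟩ | ⟨h1, h2⟩
        · exact ((h2 ▸ h').ne rfl).elim
        · exact h1.symm
      subst hz
      have : Q.length = 0 := closed_nodup_nil Q (List.nodup_cons.mp hnd).2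
      simp [Walk.length_cons, this]
    · exfalso
      have : w ∈ Q.support := Walk.snd_mem_support_of_mem_edges Q he
      exact (List.nodup_cons.mp hnd).1 this

lemma odd_closed_walk_has_odd_cycle :
    ∀ (n : ℕ) (v : V) (W : G.Walk v v), W.length ≤ n → Odd W.length →
      ∃ (u : V) (C : G.Walk u u), C.IsCycle ∧ Odd C.length ∧
        ∀ x ∈ C.support, x ∈ W.support := by
  intro n
  induction n with
  | zero =>
    intro v W hle hodd
    rw [Nat.le_zero.mp hle] at hodd
    simp at hodd
  | succ n IH =>
    intro v W hle hodd
    cases W with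
    | nil => simp at hodd
    | @cons _ w _ h P =>
      by_cases hnd : P.support.Nodup
      · -- either a cycle or length 2
        by_cases he : s(v, w) ∈ P.edges
        · have h1 : P.length = 1 := path_edge_end P hnd he
          rw [Walk.length_cons, h1] at hodd
          exact absurd hodd (by decide)
        · refine ⟨v, Walk.cons h P, ?_, hodd, fun x hx => hx⟩
          rw [Walk.cons_isCycle_iff]
          exact ⟨(Walk.isPath_def P).mpr hnd, he⟩
      · -- find duplicate vertex
        have hdup : ∃ u, 2 ≤ P.support.count u := by
          by_contra hcon
          push_neg at hcon
          exact hnd (List.nodup_iff_count_le_one.mpr fun a => by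
            have := hcon a; omega)
        obtain ⟨u, hu2⟩ := hdup
        have hu : u ∈ P.support := List.count_pos_iff.mp (by omega)
        set T := P.takeUntil u hu with hT
        set D := P.dropUntil u hu with hD
        have hPTD : T.append D = P := P.take_spec hu
        have hcount : P.support.count u = T.support.count u + D.support.tail.count u := by
          rw [← hPTD, Walk.support_append, List.count_append]
        rw [P.count_support_takeUntil_eq_one hu] at hcount
        have hutail : u ∈ D.support.tail := by
          refine List.count_pos_iff.mp ?_
          omega
        -- D is a cons
        cases hDc : D with
        | nil =>
          rw [hDc] at hutail
          simp at hutail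
        | @cons _ z _ hDadj D₂ =>
          have hu₂ : u ∈ D₂.support := by
            rw [hDc] at hutail
            simpa using hutail
          set T₂ := D₂.takeUntil u hu₂ with hT₂
          set R₂ := D₂.dropUntil u hu₂ with hR₂
          have hD₂ : T₂.append R₂ = D₂ := D₂.take_spec hu₂
          set C₀ : G.Walk u u := Walk.cons hDadj T₂ with hC₀
          set W₂ : G.Walk v v := Walk.cons h (T.append R₂) with hW₂
          have hlen : (Walk.cons h P).length = C₀.length + W₂.length := by
            rw [hC₀, hW₂]
            simp only [Walk.length_cons, Walk.length_append]
            rw [← hPTD, hDc, ← hD₂]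
            simp only [Walk.length_append, Walk.length_cons]
            omega
          have hsubC₀ : ∀ x ∈ C₀.support, x ∈ (Walk.cons h P).support := by
            intro x hx
            have hx' : x = u ∨ x ∈ T₂.support := by
              rw [hC₀, Walk.support_cons] at hx
              exact List.mem_cons.mp hx
            have hxP : x ∈ P.support := by
              rw [← hPTD]
              refine (Walk.mem_support_append_iff _ _).mpr ?_
              right
              rw [hDc]
              rcases hx' with rfl | hx2
              · exact Walk.start_mem_support _
              · rw [Walk.support_cons]
                exact List.mem_cons_of_mem _ (Walk.support_takeUntil_subset _ hu₂ hx2)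
            rw [Walk.support_cons]
            exact List.mem_cons_of_mem _ hxP
          have hsubW₂ : ∀ x ∈ W₂.support, x ∈ (Walk.cons h P).support := by
            intro x hx
            have hx' : x = v ∨ x ∈ (T.append R₂).support := by
              rw [hW₂, Walk.support_cons] at hx
              exact List.mem_cons.mp hx
            rcases hx' with rfl | hx2
            · exact Walk.start_mem_support _
            · have hxP : x ∈ P.support := by
                rw [← hPTD]
                refine (Walk.mem_support_append_iff _ _).mpr ?_
                rcases (Walk.mem_support_append_iff _ _).mp hx2 with hx3 | hx3
                · left; exact hx3
                · right
                  rw [hDc, Walk.support_cons]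
                  exact List.mem_cons_of_mem _ (Walk.support_dropUntil_subset _ hu₂ hx3)
              rw [Walk.support_cons]
              exact List.mem_cons_of_mem _ hxP
          have hC₀pos : 1 ≤ C₀.length := by rw [hC₀, Walk.length_cons]; omega
          have hW₂pos : 1 ≤ W₂.length := by rw [hW₂, Walk.length_cons]; omega
          rcases Nat.even_or_odd C₀.length with hpar | hpar
          · have hodd₂ : Odd W₂.length := by
              rw [hlen] at hodd
              rcases hpar with ⟨k, hk⟩
              rcases hodd with ⟨m, hm⟩
              exact ⟨m - k, by omega⟩
            obtain ⟨u', C, hC, hCodd, hCsub⟩ := IH v W₂ (by omega) hodd₂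
            exact ⟨u', C, hC, hCodd, fun x hx => hsubW₂ x (hCsub x hx)⟩
          · obtain ⟨u', C, hC, hCodd, hCsub⟩ := IH u C₀ (by omega) hpar
            exact ⟨u', C, hC, hCodd, fun x hx => hsubC₀ x (hCsub x hx)⟩
section graph
variable {V : Type*} [Fintype V] [DecidableEq V] (G : SimpleGraph V) [DecidableRel G.Adj]
  (A : Finset (V × V))

/-- arcs allowed in the auxiliary digraph -/
def AllowedP (a : (V × V) × V) : Prop :=
  a.1 ∈ A ∧ a.2 ≠ a.1.1 ∧
    ((a.2 ∈ G.neighborFinset a.1.1 ∧ a.2 ∉ G.neighborFinset a.1.2) ∨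
     (a.2 ∉ G.neighborFinset a.1.1 ∧ a.2 ∈ G.neighborFinset a.1.2))

def negL (l : List ((V × V) × V)) : ℕ :=
  l.countP (fun a => decide (a.2 ∈ G.neighborFinset a.1.1))

lemma walk_of_trail (hadj : ∀ e ∈ A, G.Adj e.1 e.2) (s : V) :
    ∀ (l : List ((V × V) × V)), (∀ b ∈ l, AllowedP G A b) → ∀ t : V, TrailFrom l t s →
    ∃ W : G.Walk t s, 2 * l.length = W.length + negL G l ∧
      ∀ u ∈ W.support, u = s ∨ (∃ b ∈ l, u = b.1.1) ∨
        ∃ b ∈ l, u = b.1.2 ∧ b.2 ∉ G.neighborFinset b.1.1 := by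
  intro l
  induction l with
  | nil =>
    intro _ t ht
    cases ht
    refine ⟨SimpleGraph.Walk.nil, by simp [negL], ?_⟩
    intro u hu
    left
    simpa using hu
  | cons b l IH =>
    intro hall t htrail
    obtain ⟨hbt, htrail'⟩ := htrail
    obtain ⟨W', hlen', hsupp'⟩ := IH (fun x hx => hall x (List.mem_cons_of_mem _ hx)) b.2 htrail'
    obtain ⟨hbA, hbne, hxor⟩ := hall b (List.mem_cons_self)
    by_cases hp : b.2 ∈ G.neighborFinset b.1.1
    · -- single edge b.1.1 — b.2
      have hadj1 : G.Adj t b.2 := by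
        rw [← hbt]
        exact (G.mem_neighborFinset _ _).mp hp
      refine ⟨Walk.cons hadj1 W', ?_, ?_⟩
      · rw [Walk.length_cons]
        have : negL G (b :: l) = negL G l + 1 := by
          rw [negL, List.countP_cons, decide_eq_true hp]
          rfl
        rw [this]
        simp only [List.length_cons]
        omega
      · intro u hu
        rw [Walk.support_cons] at hu
        rcases List.mem_cons.mp hu with rfl | hu
        · right; left
          exact ⟨b, List.mem_cons_self, hbt.symm⟩
        · rcases hsupp' u hu with h | ⟨c, hc, hc2⟩ | ⟨c, hc, hc2⟩
          · left; exact h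
          · right; left; exact ⟨c, List.mem_cons_of_mem _ hc, hc2⟩
          · right; right; exact ⟨c, List.mem_cons_of_mem _ hc, hc2⟩
    · -- path b.1.1 — b.1.2 — b.2
      have hb2 : b.2 ∈ G.neighborFinset b.1.2 := by
        rcases hxor with ⟨h1, _⟩ | ⟨_, h2⟩
        · exact absurd h1 hp
        · exact h2
      have hadj1 : G.Adj t b.1.2 := hbt ▸ hadj b.1 hbA
      have hadj2 : G.Adj b.1.2 b.2 := (G.mem_neighborFinset _ _).mp hb2
      refine ⟨Walk.cons hadj1 (Walk.cons hadj2 W'), ?_, ?_⟩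
      · simp only [Walk.length_cons, List.length_cons]
        have : negL G (b :: l) = negL G l := by
          rw [negL, List.countP_cons, decide_eq_false hp]
          rfl
        rw [this]
        omega
      · intro u hu
        simp only [Walk.support_cons, List.mem_cons] at hu
        rcases hu with rfl | rfl | hu
        · right; left
          exact ⟨b, List.mem_cons_self, hbt.symm⟩
        · right; right
          exact ⟨b, List.mem_cons_self, rfl, hp⟩
        · rcases hsupp' u hu with h | ⟨c, hc, hc2⟩ | ⟨c, hc, hc2⟩
          · left; exact h
          · right; left; exact ⟨c, List.mem_cons_of_mem _ hc, hc2⟩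
          · right; right; exact ⟨c, List.mem_cons_of_mem _ hc, hc2⟩
end graph

section evenneg
variable {V : Type*} [Fintype V] [DecidableEq V] (G : SimpleGraph V) [DecidableRel G.Adj]
  (A : Finset (V × V))

lemma count_toFinset {α : Type*} [DecidableEq α] (P : α → Prop) [DecidablePred P] :
    ∀ l : List α, l.Nodup → (l.toFinset.filter P).card = l.countP (fun a => decide (P a)) := by
  intro l
  induction l with
  | nil => intro _; simp
  | cons a l IH =>
    intro hnd
    have ha : a ∉ l.toFinset := by simpa using (List.nodup_cons.mp hnd).1
    rw [List.toFinset_cons, filter_card_insert _ ha, List.countP_cons,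
      IH (List.nodup_cons.mp hnd).2]
    by_cases h : P a <;> simp [h]

def negC (R : Finset ((V × V) × V)) : ℕ :=
  (R.filter fun a => a.2 ∈ G.neighborFinset a.1.1).card

theorem even_negC (hadj : ∀ e ∈ A, G.Adj e.1 e.2)
    (hodd : ∀ (v : V) (C : G.Walk v v), C.IsCycle → Odd C.length →
      ∃ u ∈ C.support, G.IsClique (G.neighborSet u) ∧ outDeg A u = 0) :
    ∀ R : Finset ((V × V) × V), (∀ a ∈ R, AllowedP G A a) →
      (∀ u, outC R u = inC R u) → Even (negC G R) := by
  intro R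
  induction R using Finset.strongInduction with
  | _ R ih =>
    intro hallow hbal
    rcases R.eq_empty_or_nonempty with rfl | ⟨a, ha⟩
    · simp [negC]
    · -- set up trail from a.2 back to a.1.1 in R.erase a
      have haR' : a ∉ R.erase a := Finset.notMem_erase _ _
      have hins : insert a (R.erase a) = R := Finset.insert_erase ha
      have hbal' : ∀ u, (outC (R.erase a) u : ℤ) - inC (R.erase a) u
          = (if u = a.2 then 1 else 0) - (if u = a.1.1 then 1 else 0) := by
        intro u
        have h1 := outC_insert haR' u
        have h2 := inC_insert haR' u
        rw [hins] at h1 h2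
        have h3 := hbal u
        have g1 : (if u = a.2 then (1:ℤ) else 0) = (if a.2 = u then 1 else 0) := by
          by_cases h : u = a.2 <;> simp [h, eq_comm]
        have g2 : (if u = a.1.1 then (1:ℤ) else 0) = (if a.1.1 = u then 1 else 0) := by
          by_cases h : u = a.1.1 <;> simp [h, eq_comm]
        rw [g1, g2]
        split_ifs at h1 h2 ⊢ <;> omega
      obtain ⟨l, hnd, hmem, htr⟩ := exists_trail a.1.1 (R.erase a) a.2 hbal'
      have hanl : a ∉ l := fun h => (Finset.mem_erase.mp (hmem a h)).1 rfl
      set l2 := a :: l with hl2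
      have hnd2 : l2.Nodup := List.nodup_cons.mpr ⟨hanl, hnd⟩
      have hmem2 : ∀ b ∈ l2, b ∈ R := by
        intro b hb
        rcases List.mem_cons.mp hb with rfl | hb
        · exact ha
        · exact Finset.mem_of_mem_erase (hmem b hb)
      have htr2 : TrailFrom l2 a.1.1 a.1.1 := ⟨rfl, htr⟩
      obtain ⟨W, hWlen, hWsupp⟩ := walk_of_trail G A hadj a.1.1 l2
        (fun b hb => hallow b (hmem2 b hb)) a.1.1 htr2
      -- the closed trail has even neg-count
      have hevenL : Even (negL G l2) := by
        by_contra hoddL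
        have hoddW : Odd W.length := by
          rw [Nat.odd_iff]
          rw [Nat.even_iff] at hoddL
          have : negL G l2 % 2 = 1 := by omega
          omega
        obtain ⟨u', C, hCcyc, hCodd, hCsub⟩ :=
          odd_closed_walk_has_odd_cycle W.length a.1.1 W le_rfl hoddW
        obtain ⟨u, huC, hclique, hdeg0⟩ := hodd u' C hCcyc hCodd
        have huW := hCsub u huC
        have houtpos : ∀ e ∈ A, e.1 = u → False := by
          intro e he heu
          have : e ∈ A.filter (fun p => p.1 = u) := Finset.mem_filter.mpr ⟨he, heu⟩
          have h0 : A.filter (fun p => p.1 = u) = ∅ := Finset.card_eq_zero.mp hdeg0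
          rw [h0] at this
          exact absurd this (Finset.notMem_empty _)
        rcases hWsupp u huW with rfl | ⟨b, hb, rfl⟩ | ⟨b, hb, rfl, hbn⟩
        · exact houtpos a.1 ((hallow a ha).1) rfl
        · exact houtpos b.1 ((hallow b (hmem2 b hb)).1) rfl
        · -- u = b.1.2, simplicial vertex, contradiction
          obtain ⟨hbA, hbne, hxor⟩ := hallow b (hmem2 b hb)
          have hb2 : b.2 ∈ G.neighborFinset b.1.2 := by
            rcases hxor with ⟨h1, _⟩ | ⟨_, h2⟩
            · exact absurd h1 hbn
            · exact h2
          have hx : b.1.1 ∈ G.neighborSet b.1.2 := (hadj b.1 hbA).symm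
          have hy : b.2 ∈ G.neighborSet b.1.2 := (G.mem_neighborFinset _ _).mp hb2
          have hne : b.1.1 ≠ b.2 := fun h => hbne h.symm
          have : G.Adj b.1.1 b.2 := hclique hx hy hne
          exact hbn ((G.mem_neighborFinset _ _).mpr this)
      -- transfer to Finset counts
      set C2 := l2.toFinset with hC2
      have hC2sub : C2 ⊆ R := fun x hx => hmem2 x (List.mem_toFinset.mp hx)
      have hC2bal : ∀ u, outC C2 u = inC C2 u := by
        intro u
        have := trail_bal l2 hnd2 a.1.1 a.1.1 htr2 u
        rw [hC2]
        omega
      have hC2neg : negC G C2 = negL G l2 := by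
        rw [negC, negL, hC2]
        exact count_toFinset _ l2 hnd2
      -- sdiff counts
      have hfilt : ∀ (p : ((V × V) × V) → Prop) [DecidablePred p],
          ((R \ C2).filter p) = (R.filter p) \ (C2.filter p) := by
        intro p _
        ext x
        simp only [Finset.mem_filter, Finset.mem_sdiff]
        constructor
        · rintro ⟨⟨h1, h2⟩, h3⟩
          exact ⟨⟨h1, h3⟩, fun hc => h2 hc.1⟩
        · rintro ⟨⟨h1, h3⟩, h2⟩
          exact ⟨⟨h1, fun hc => h2 ⟨hc, h3⟩⟩, h3⟩
      have hcardsub : ∀ (p : ((V × V) × V) → Prop) [DecidablePred p],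
          ((R \ C2).filter p).card = (R.filter p).card - (C2.filter p).card ∧
          (C2.filter p).card ≤ (R.filter p).card := by
        intro p _
        have hss : C2.filter p ⊆ R.filter p := Finset.filter_subset_filter _ hC2sub
        rw [hfilt p]
        exact ⟨Finset.card_sdiff_of_subset hss, Finset.card_le_card hss⟩
      have hbalsub : ∀ u, outC (R \ C2) u = inC (R \ C2) u := by
        intro u
        have h1 := hcardsub (fun a => a.1.1 = u)
        have h2 := hcardsub (fun a => a.2 = u)
        have h3 := hbal u
        have h4 := hC2bal u
        simp only [outC, inC] at h1 h2 h3 h4 ⊢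
        omega
      have hC2ne : C2.Nonempty := ⟨a, by simp [hC2, hl2]⟩
      have hssub : R \ C2 ⊂ R := Finset.sdiff_ssubset hC2sub hC2ne
      have hih := ih (R \ C2) hssub (fun x hx => hallow x (Finset.mem_sdiff.mp hx).1) hbalsub
      have hnegsplit : negC G R = negC G C2 + negC G (R \ C2) := by
        have h1 := hcardsub (fun a => a.2 ∈ G.neighborFinset a.1.1)
        simp only [negC] at *
        omega
      rw [hnegsplit, hC2neg]
      exact Even.add hevenL hih

end evenneg

section coeffsec
variable {V : Type*} [Fintype V] [DecidableEq V] (G : SimpleGraph V) [DecidableRel G.Adj]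
  (A : Finset (V × V))

/-- coefficient of `X u` in the `e`-factor -/
def cfn (e : V × V) (u : V) : ℚ :=
  (if u ∈ G.neighborFinset e.2 then 1 else 0) - (if u ∈ G.neighborFinset e.1 then 1 else 0)

lemma factor_eq (e : V × V) :
    ((∑ u ∈ G.neighborFinset e.2, X u) - (∑ u ∈ G.neighborFinset e.1, X u) : MvPolynomial V ℚ)
      = ∑ u : V, C (cfn G e u) * X u := by
  have h : ∀ (s : Finset V), (∑ u ∈ s, (X u : MvPolynomial V ℚ))
      = ∑ u : V, (if u ∈ s then (X u : MvPolynomial V ℚ) else 0) := by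
    intro s
    rw [Finset.sum_ite_mem, Finset.univ_inter]
  rw [h, h, ← Finset.sum_sub_distrib]
  refine Finset.sum_congr rfl fun u _ => ?_
  rw [cfn, map_sub, sub_mul]
  congr 1
  · by_cases hmem : u ∈ G.neighborFinset e.2 <;> simp [hmem]
  · by_cases hmem : u ∈ G.neighborFinset e.1 <;> simp [hmem]

lemma prod_X_eq_monomial {ι : Type*} (s : Finset ι) (g : ι → V) :
    (∏ x ∈ s, (X (g x) : MvPolynomial V ℚ))
      = monomial (∑ x ∈ s, Finsupp.single (g x) 1) 1 := by
  induction s using Finset.cons_induction with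
  | empty => simp
  | cons a s ha IH =>
    rw [Finset.prod_cons, Finset.sum_cons, IH, ← pow_one (X (g a)), X_pow_eq_monomial,
      monomial_mul, one_mul]

lemma GP_coeff (T : V →₀ ℕ) :
    MvPolynomial.coeff T (∏ e ∈ A,
        ((∑ u ∈ G.neighborFinset e.2, X u) - (∑ u ∈ G.neighborFinset e.1, X u)))
      = ∑ f : {x // x ∈ A} → V,
          (if (∑ e : {x // x ∈ A}, Finsupp.single (f e) 1) = T
            then ∏ e : {x // x ∈ A}, cfn G e.val (f e) else 0) := by
  rw [← Finset.prod_attach A, ← Finset.univ_eq_attach]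
  conv_lhs => rw [Finset.prod_congr rfl (fun e _ => factor_eq G e.val)]
  rw [Finset.prod_univ_sum]
  rw [Fintype.piFinset_univ]
  rw [show ∀ (q : ({x // x ∈ A} → V) → MvPolynomial V ℚ), (∑ f : {x // x ∈ A} → V, q f) = ∑ f ∈ univ, q f from fun _ => rfl]
  rw [MvPolynomial.coeff_sum]
  refine Finset.sum_congr rfl fun f _ => ?_
  rw [Finset.prod_mul_distrib, ← map_prod, prod_X_eq_monomial, MvPolynomial.coeff_C_mul,
    MvPolynomial.coeff_monomial]
  by_cases h : (∑ e : {x // x ∈ A}, Finsupp.single (f e) 1) = T <;> rw [mul_ite, mul_one, mul_zero]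
end coeffsec

section coeffsec2
variable {V : Type*} [Fintype V] [DecidableEq V] (G : SimpleGraph V) [DecidableRel G.Adj]
  (A : Finset (V × V))

lemma cardAttach (p : (V × V) → Prop) [DecidablePred p] :
    ((univ : Finset {x // x ∈ A}).filter fun e => p e.val).card = (A.filter p).card := by
  refine Finset.card_bij (fun e _ => e.val) ?_ ?_ ?_
  · intro e he
    rw [Finset.mem_filter] at he ⊢
    exact ⟨e.2, he.2⟩
  · intro x hx y hy h
    exact Subtype.ext h
  · intro x hx
    rw [Finset.mem_filter] at hx
    exact ⟨⟨x, hx.1⟩, Finset.mem_filter.mpr ⟨Finset.mem_univ _, hx.2⟩, rfl⟩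

/-- the key per-function product evaluation -/
lemma prod_cfn_eq_one (hadj : ∀ e ∈ A, G.Adj e.1 e.2)
    (hodd : ∀ (v : V) (C : G.Walk v v), C.IsCycle → Odd C.length →
      ∃ u ∈ C.support, G.IsClique (G.neighborSet u) ∧ outDeg A u = 0)
    (f : {x // x ∈ A} → V)
    (hgood : ∀ v, ((univ : Finset {x // x ∈ A}).filter fun e => f e = v).card = outDeg A v)
    (hadm : ∀ e : {x // x ∈ A}, cfn G e.val (f e) ≠ 0) :
    ∏ e : {x // x ∈ A}, cfn G e.val (f e) = 1 := by
  classical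
  -- each factor is ±1
  have hfac : ∀ e : {x // x ∈ A},
      cfn G e.val (f e) = if f e ∈ G.neighborFinset e.val.1 then -1 else 1 := by
    intro e
    have h := hadm e
    rw [cfn] at h ⊢
    by_cases h1 : f e ∈ G.neighborFinset e.val.1 <;>
      by_cases h2 : f e ∈ G.neighborFinset e.val.2 <;> simp [h1, h2] at h ⊢
  rw [Finset.prod_congr rfl fun e _ => hfac e]
  rw [Finset.prod_ite _ _]
  rw [Finset.prod_const, Finset.prod_const]
  rw [one_pow, mul_one]
  -- the exponent is even
  set R : Finset ((V × V) × V) :=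
    ((univ : Finset {x // x ∈ A}).filter fun e => f e ≠ e.val.1).image
      (fun e => (e.val, f e)) with hR
  have hinj : Function.Injective (fun e : {x // x ∈ A} => ((e.val : V × V), f e)) := by
    intro x y h
    exact Subtype.ext (congrArg Prod.fst h)
  have hcards : ∀ (p : ((V × V) × V) → Prop) [DecidablePred p],
      (R.filter p).card
        = ((univ : Finset {x // x ∈ A}).filter fun e => f e ≠ e.val.1 ∧ p (e.val, f e)).card := by
    intro p _
    rw [hR, Finset.filter_image, Finset.card_image_of_injective _ hinj, Finset.filter_filter]
  have hallow : ∀ a ∈ R, AllowedP G A a := by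
    intro a haR
    rw [hR, Finset.mem_image] at haR
    obtain ⟨e, he, rfl⟩ := haR
    rw [Finset.mem_filter] at he
    have h := hadm e
    rw [cfn] at h
    refine ⟨e.2, he.2, ?_⟩
    by_cases h1 : f e ∈ G.neighborFinset e.val.1 <;>
      by_cases h2 : f e ∈ G.neighborFinset e.val.2 <;> simp [h1, h2] at h ⊢
  have hbal : ∀ u, outC R u = inC R u := by
    intro u
    have k0 : ∀ (q : {x // x ∈ A} → Prop) [DecidablePred q],
        ((univ : Finset {x // x ∈ A}).filter fun e => q e ∧ f e = e.val.1).card +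
        ((univ : Finset {x // x ∈ A}).filter fun e => q e ∧ ¬(f e = e.val.1)).card
          = ((univ : Finset {x // x ∈ A}).filter q).card := by
      intro q _
      rw [← Finset.filter_filter, ← Finset.filter_filter]
      exact Finset.card_filter_add_card_filter_not _
    have k1 := k0 (fun e => e.val.1 = u)
    have k2 := k0 (fun e => f e = u)
    have k3 : ((univ : Finset {x // x ∈ A}).filter fun e => e.val.1 = u ∧ f e = e.val.1)
        = ((univ : Finset {x // x ∈ A}).filter fun e => f e = u ∧ f e = e.val.1) := by
      refine Finset.filter_congr fun e _ => ?_
      constructor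
      · rintro ⟨h1, h2⟩; exact ⟨h2.trans h1, h2⟩
      · rintro ⟨h1, h2⟩; exact ⟨h2.symm.trans h1, h2⟩
    have k3' := congrArg Finset.card k3
    have hswap1 : ((univ : Finset {x // x ∈ A}).filter fun e => ¬(f e = e.val.1) ∧ e.val.1 = u)
        = ((univ : Finset {x // x ∈ A}).filter fun e => (e.val.1 = u) ∧ ¬(f e = e.val.1)) :=
      Finset.filter_congr fun e _ => and_comm
    have hswap2 : ((univ : Finset {x // x ∈ A}).filter fun e => ¬(f e = e.val.1) ∧ f e = u)
        = ((univ : Finset {x // x ∈ A}).filter fun e => (f e = u) ∧ ¬(f e = e.val.1)) :=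
      Finset.filter_congr fun e _ => and_comm
    have hout : outC R u
        = ((univ : Finset {x // x ∈ A}).filter fun e => (e.val.1 = u) ∧ ¬(f e = e.val.1)).card := by
      rw [outC, hcards, hswap1]
    have hin : inC R u
        = ((univ : Finset {x // x ∈ A}).filter fun e => (f e = u) ∧ ¬(f e = e.val.1)).card := by
      rw [inC, hcards, hswap2]
    have hcnt1 : ((univ : Finset {x // x ∈ A}).filter fun e => e.val.1 = u).card
        = outDeg A u := cardAttach A (fun x => x.1 = u)
    have hcnt2 := hgood u
    rw [hout, hin]
    omega
  have heven := even_negC G A hadj hodd R hallow hbal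
  have hnegR : negC G R
      = ((univ : Finset {x // x ∈ A}).filter fun e => f e ∈ G.neighborFinset e.val.1).card := by
    rw [negC, hcards]
    congr 1
    refine Finset.filter_congr fun e _ => ?_
    simp only [Finset.mem_univ, true_implies]
    constructor
    · rintro ⟨_, h2⟩; exact h2
    · intro h2
      exact ⟨fun hf => ((G.mem_neighborFinset _ _).mp h2).ne' hf, h2⟩
  rw [hnegR] at heven
  rcases heven with ⟨k, hk⟩
  rw [hk, show k + k = 2 * k by ring, pow_mul]
  norm_num
end coeffsec2

section lagrange

lemma coeff_prod_X_sub_C_top (s : Finset ℚ) :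
    (∏ b ∈ s, (Polynomial.X - Polynomial.C b)).coeff s.card = 1 := by
  have hm : (∏ b ∈ s, (Polynomial.X - Polynomial.C b) : Polynomial ℚ).Monic :=
    Polynomial.monic_prod_of_monic _ _ fun b _ => Polynomial.monic_X_sub_C b
  have hd : (∏ b ∈ s, (Polynomial.X - Polynomial.C b) : Polynomial ℚ).natDegree = s.card := by
    rw [Polynomial.natDegree_prod_of_monic _ _ fun b _ => Polynomial.monic_X_sub_C b]
    simp
  simpa [hd] using hm.coeff_natDegree

lemma lagrange_sum_pow (S : Finset ℚ) (i : ℕ) (hi : i < S.card) :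
    ∑ a ∈ S, a ^ i * (∏ b ∈ S.erase a, (a - b))⁻¹
      = if i = S.card - 1 then 1 else 0 := by
  have hinj : Set.InjOn (id : ℚ → ℚ) S := Set.injOn_id _
  have hdeg : (Polynomial.X ^ i : Polynomial ℚ).degree < S.card :=
    lt_of_le_of_lt (Polynomial.degree_X_pow_le i) (by exact_mod_cast Nat.cast_lt.mpr hi)
  have h := Lagrange.eq_interpolate (f := (Polynomial.X ^ i : Polynomial ℚ)) hinj hdeg
  have hco := congrArg (fun p => Polynomial.coeff p (S.card - 1)) h
  simp only [Lagrange.interpolate_apply] at hco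
  rw [Polynomial.coeff_X_pow] at hco
  rw [show (if i = S.card - 1 then (1:ℚ) else 0) = (if S.card - 1 = i then 1 else 0) by
    by_cases h : i = S.card - 1 <;> simp [h, Ne.symm, eq_comm]]
  rw [hco, Polynomial.finset_sum_coeff]
  refine Finset.sum_congr rfl fun a ha => ?_
  have hbasis : (Lagrange.basis S (id : ℚ → ℚ) a).coeff (S.card - 1)
      = (∏ b ∈ S.erase a, (a - b))⁻¹ := by
    unfold Lagrange.basis Lagrange.basisDivisor
    rw [Finset.prod_mul_distrib, ← map_prod]
    rw [mul_comm, Polynomial.coeff_mul_C]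
    rw [show S.card - 1 = (S.erase a).card by rw [Finset.card_erase_of_mem ha]]
    simp only [id_eq]
    rw [coeff_prod_X_sub_C_top]
    rw [one_mul, ← Finset.prod_inv_distrib]
  rw [Polynomial.coeff_C_mul, hbasis]
  simp [mul_comm]

end lagrange


noncomputable def wt (S : Finset ℚ) (a : ℚ) : ℚ := (∏ b ∈ S.erase a, (a - b))⁻¹

lemma lagrange_wt (S : Finset ℚ) (i : ℕ) (hi : i < S.card) :
    ∑ a ∈ S, a ^ i * wt S a = if i = S.card - 1 then 1 else 0 := by
  simpa [wt] using lagrange_sum_pow S i hi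

lemma sum_piFinset_succ {n : ℕ} {α : Fin (n+1) → Type*} [∀ i, DecidableEq (α i)]
    (S : ∀ i, Finset (α i)) {M : Type*} [AddCommMonoid M] (g : (∀ i, α i) → M) :
    ∑ s ∈ Fintype.piFinset S, g s
      = ∑ a ∈ S 0, ∑ s' ∈ Fintype.piFinset (fun i => S (Fin.succ i)), g (Fin.cons a s') := by
  have h := Finset.filter_piFinset_eq_map_consEquiv S (fun _ => True)
  simp only [Finset.filter_true] at h
  rw [h, Finset.sum_map, Finset.sum_product]
  rfl

lemma finsupp_symm_cons {n : ℕ} (t : Fin (n+1) → ℕ) :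
    (Finsupp.equivFunOnFinite.symm t : Fin (n+1) →₀ ℕ)
      = Finsupp.cons (t 0) (Finsupp.equivFunOnFinite.symm (fun i => t (Fin.succ i))) := by
  ext i
  refine Fin.cases ?_ (fun j => ?_) i
  · simp
  · simp

lemma sum_support_finsupp_symm {n : ℕ} (t : Fin n → ℕ) :
    ∑ i ∈ (Finsupp.equivFunOnFinite.symm t).support, (Finsupp.equivFunOnFinite.symm t) i
      = ∑ i, t i := by
  rw [Finset.sum_subset (Finset.subset_univ _)]
  · exact Finset.sum_congr rfl fun i _ => rfl
  · intro i _ hi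
    exact Finsupp.notMem_support_iff.mp hi

theorem quantCN : ∀ (n : ℕ) (t : Fin n → ℕ) (S : Fin n → Finset ℚ),
    (∀ i, (S i).card = t i + 1) → ∀ (P : MvPolynomial (Fin n) ℚ),
    P.totalDegree ≤ ∑ i, t i →
    ∑ s ∈ Fintype.piFinset S, eval s P * ∏ i, wt (S i) (s i)
      = P.coeff (Finsupp.equivFunOnFinite.symm t) := by
  intro n
  induction n with
  | zero =>
    intro t S hS P hdeg
    have hP := MvPolynomial.eq_C_of_isEmpty P
    have h1 : (Finsupp.equivFunOnFinite.symm t : Fin 0 →₀ ℕ) = 0 := Subsingleton.elim _ _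
    have h2 : (Fintype.piFinset S) = {(finZeroElim : ∀ i : Fin 0, ℚ)} := by
      ext f
      simp only [Fintype.mem_piFinset, Finset.mem_singleton]
      constructor
      · intro _; exact funext fun i => i.elim0
      · intro _ i; exact i.elim0
    rw [h1, h2, Finset.sum_singleton]
    conv_lhs => rw [hP]
    simp [MvPolynomial.coeff_C]
  | succ n IH =>
    intro t S hS P hdeg
    set Q := finSuccEquiv ℚ n P with hQ
    set t' : Fin n → ℕ := fun i => t (Fin.succ i) with ht'
    set S' : Fin n → Finset ℚ := fun i => S (Fin.succ i) with hS'
    set M := Q.natDegree + 1 with hM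
    set B : ℕ → ℚ := fun j =>
      ∑ s' ∈ Fintype.piFinset S', eval s' (Q.coeff j) * ∏ i, wt (S' i) (s' i) with hB
    have hsum : ∑ i, t i = t 0 + ∑ i, t' i := by
      rw [Fin.sum_univ_succ]
    rw [sum_piFinset_succ]
    have key : ∀ a ∈ S 0, ∀ s' ∈ Fintype.piFinset S',
        eval (Fin.cons a s' : Fin (n+1) → ℚ) P
            * ∏ i, wt (S i) ((Fin.cons a s' : Fin (n+1) → ℚ) i)
          = ∑ j ∈ Finset.range M,
              (a ^ j * wt (S 0) a) * (eval s' (Q.coeff j) * ∏ i, wt (S' i) (s' i)) := by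
      intro a _ s' _
      have he : eval (Fin.cons a s' : Fin (n+1) → ℚ) P
          = Polynomial.eval a (Polynomial.map (eval s') Q) :=
        eval_eq_eval_mv_eval' s' a P
      have hdm : (Polynomial.map (eval s') Q).natDegree < M :=
        Nat.lt_succ_of_le Polynomial.natDegree_map_le
      rw [he, Polynomial.eval_eq_sum_range' hdm, Finset.sum_mul]
      refine Finset.sum_congr rfl fun j _ => ?_
      rw [Polynomial.coeff_map]
      have hw : (∏ i, wt (S i) ((Fin.cons a s' : Fin (n+1) → ℚ) i))
          = wt (S 0) a * ∏ i, wt (S' i) (s' i) := by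
        rw [Fin.prod_univ_succ]
        simp [hS']
      rw [hw]; ring
    rw [Finset.sum_congr rfl (fun a ha => Finset.sum_congr rfl (fun s' hs' => key a ha s' hs'))]
    have hswap : ∑ a ∈ S 0, ∑ s' ∈ Fintype.piFinset S', ∑ j ∈ Finset.range M,
        (a ^ j * wt (S 0) a) * (eval s' (Q.coeff j) * ∏ i, wt (S' i) (s' i))
        = ∑ j ∈ Finset.range M, (∑ a ∈ S 0, a ^ j * wt (S 0) a) * B j := by
      rw [Finset.sum_congr rfl (fun a _ => Finset.sum_comm)]
      rw [Finset.sum_congr rfl (fun a _ => Finset.sum_congr rfl (fun j _ =>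
        (Finset.mul_sum _ _ _).symm))]
      rw [Finset.sum_comm]
      exact Finset.sum_congr rfl fun j _ => (Finset.sum_mul _ _ _).symm
    rw [hswap]
    have hterm : ∀ j ∈ Finset.range M, (∑ a ∈ S 0, a ^ j * wt (S 0) a) * B j
        = if j = t 0
            then (Q.coeff (t 0)).coeff (Finsupp.equivFunOnFinite.symm t') else 0 := by
      intro j _
      rcases lt_trichotomy j (t 0) with hlt | heq | hgt
      · have hA : ∑ a ∈ S 0, a ^ j * wt (S 0) a = 0 := by
          have h2 := lagrange_wt (S 0) j (by rw [hS 0]; omega)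
          rw [hS 0] at h2
          rw [if_neg (show ¬ j = t 0 + 1 - 1 by omega)] at h2
          exact h2
        rw [hA, zero_mul, if_neg (by omega)]
      · have hA : ∑ a ∈ S 0, a ^ j * wt (S 0) a = 1 := by
          have h2 := lagrange_wt (S 0) j (by rw [hS 0]; omega)
          rw [hS 0] at h2
          rw [if_pos (show j = t 0 + 1 - 1 by omega)] at h2
          exact h2
        rw [hA, one_mul, if_pos heq, heq]
        by_cases hq : Q.coeff (t 0) = 0
        · rw [hB]
          simp [hq]
        · have hdq := totalDegree_coeff_finSuccEquiv_add_le P (t 0) hq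
          rw [← hQ] at hdq
          refine IH t' S' (fun i => hS (Fin.succ i)) (Q.coeff (t 0)) ?_
          rw [hsum] at hdeg
          omega
      · rw [if_neg (by omega)]
        by_cases hq : Q.coeff j = 0
        · rw [hB]
          simp [hq]
        · have hdq := totalDegree_coeff_finSuccEquiv_add_le P j hq
          rw [← hQ] at hdq
          have hBj : B j = (Q.coeff j).coeff (Finsupp.equivFunOnFinite.symm t') := by
            refine IH t' S' (fun i => hS (Fin.succ i)) (Q.coeff j) ?_
            rw [hsum] at hdeg
            omega
          rw [hBj, MvPolynomial.coeff_eq_zero_of_totalDegree_lt, mul_zero]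
          rw [sum_support_finsupp_symm]
          rw [hsum] at hdeg
          omega
    rw [Finset.sum_congr rfl hterm, Finset.sum_ite_eq' (Finset.range M) (t 0)
      (fun _ => (Q.coeff (t 0)).coeff (Finsupp.equivFunOnFinite.symm t'))]
    rw [finsupp_symm_cons, ← finSuccEquiv_coeff_coeff]
    by_cases htM : t 0 ∈ Finset.range M
    · rw [if_pos htM]
    · rw [if_neg htM]
      have : Q.coeff (t 0) = 0 :=
        Polynomial.coeff_eq_zero_of_natDegree_lt (by
          simp only [Finset.mem_range, hM] at htM
          omega)
      rw [this]
      simp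

theorem combNull {V : Type*} [Fintype V] [DecidableEq V] (t : V → ℕ) (S : V → Finset ℚ)
    (hS : ∀ v, (S v).card = t v + 1) (P : MvPolynomial V ℚ)
    (hdeg : P.totalDegree ≤ ∑ v, t v)
    (hc : P.coeff (Finsupp.equivFunOnFinite.symm t) ≠ 0) :
    ∃ s : V → ℚ, (∀ v, s v ∈ S v) ∧ eval s P ≠ 0 := by
  by_contra hcon
  push_neg at hcon
  set e := Fintype.equivFin V with he
  set P' := rename e P with hP'
  set t' : Fin (Fintype.card V) → ℕ := fun i => t (e.symm i) with ht'
  set S' : Fin (Fintype.card V) → Finset ℚ := fun i => S (e.symm i) with hS'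
  have hmap : Finsupp.mapDomain e (Finsupp.equivFunOnFinite.symm t)
      = Finsupp.equivFunOnFinite.symm t' := by
    ext i
    rw [Finsupp.mapDomain_equiv_apply]
    simp [ht']
  have hc' : P'.coeff (Finsupp.equivFunOnFinite.symm t') ≠ 0 := by
    rw [← hmap, coeff_rename_mapDomain e e.injective]
    exact hc
  have hdeg' : P'.totalDegree ≤ ∑ i, t' i := by
    refine le_trans (totalDegree_rename_le e P) ?_
    rw [ht', Equiv.sum_comp e.symm t]
    exact hdeg
  have := quantCN (Fintype.card V) t' S' (fun i => hS (e.symm i)) P' hdeg'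
  rw [← this] at hc'
  refine hc' (Finset.sum_eq_zero fun s hs => ?_)
  have hz : eval (s ∘ e) P = 0 := by
    refine hcon (s ∘ e) fun v => ?_
    have := (Fintype.mem_piFinset.mp hs) (e v)
    simpa [hS'] using this
  rw [hP', eval_rename, hz, zero_mul]

end Aux

/-- If every odd cycle of `G` contains a simplicial vertex of out-degree 0 in `D`, then `G`
admits an additive coloring from any lists of `d⁺_D(v) + 1` positive integers. -/
theorem additive_coloring_of_simplicial_sinks {V : Type*} [Fintype V] [DecidableEq V]
    (G : SimpleGraph V) [DecidableRel G.Adj]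
    (A : Finset (V × V)) (hA : IsOrientation G A)
    (hodd : ∀ (v : V) (C : G.Walk v v), C.IsCycle → Odd C.length →
      ∃ u ∈ C.support, G.IsClique (G.neighborSet u) ∧ outDeg A u = 0)
    (L : V → Finset ℕ) (hpos : ∀ v, ∀ k ∈ L v, 0 < k)
    (hL : ∀ v, (L v).card = outDeg A v + 1) :
    ∃ ℓ : V → ℕ, (∀ v, ℓ v ∈ L v) ∧ IsAdditiveColoring G ℓ := by
  classical
  have hadj : ∀ e ∈ A, G.Adj e.1 e.2 := by
    intro e he
    exact (hA.1 e.1 e.2).mpr (Or.inl (by rwa [Prod.mk.eta]))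
  set t : V → ℕ := fun v => outDeg A v with ht
  set P : MvPolynomial V ℚ := ∏ e ∈ A,
      ((∑ u ∈ G.neighborFinset e.2, X u) - (∑ u ∈ G.neighborFinset e.1, X u)) with hP
  -- total degree bound
  have hsumt : ∑ v, t v = A.card := by
    rw [ht]
    exact (Finset.card_eq_sum_card_fiberwise (fun e _ => Finset.mem_univ e.1)).symm
  have hdeg : P.totalDegree ≤ ∑ v, t v := by
    rw [hsumt, hP]
    refine le_trans (MvPolynomial.totalDegree_finset_prod _ _) ?_
    have hone : ∀ e ∈ A, (((∑ u ∈ G.neighborFinset e.2, X u) -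
        (∑ u ∈ G.neighborFinset e.1, X u)) : MvPolynomial V ℚ).totalDegree ≤ 1 := by
      intro e _
      rw [sub_eq_add_neg]
      refine le_trans (MvPolynomial.totalDegree_add _ _) ?_
      rw [max_le_iff, MvPolynomial.totalDegree_neg]
      constructor <;>
      · refine le_trans (MvPolynomial.totalDegree_finset_sum _ _) ?_
        refine Finset.sup_le fun u _ => ?_
        rw [MvPolynomial.totalDegree_X]
    calc ∑ e ∈ A, (((∑ u ∈ G.neighborFinset e.2, X u) -
          (∑ u ∈ G.neighborFinset e.1, X u)) : MvPolynomial V ℚ).totalDegree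
        ≤ ∑ e ∈ A, 1 := Finset.sum_le_sum hone
      _ = A.card := by rw [Finset.sum_const, smul_eq_mul, mul_one]
  -- the coefficient
  set T : V →₀ ℕ := Finsupp.equivFunOnFinite.symm t with hT
  have hgood_iff : ∀ f : {x // x ∈ A} → V,
      (∑ e : {x // x ∈ A}, Finsupp.single (f e) 1) = T ↔
      (∀ v, ((univ : Finset {x // x ∈ A}).filter fun e => f e = v).card = outDeg A v) := by
    intro f
    rw [Finsupp.ext_iff]
    refine forall_congr' fun v => ?_
    have h1 : (∑ e : {x // x ∈ A}, Finsupp.single (f e) 1) v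
        = ((univ : Finset {x // x ∈ A}).filter fun e => f e = v).card := by
      rw [Finset.sum_apply']
      rw [Finset.card_filter]
      refine Finset.sum_congr rfl fun e _ => ?_
      rw [Finsupp.single_apply]
    have h2 : T v = outDeg A v := by
      rw [hT]
      simp [ht]
    rw [h1, h2]
  have hcoeff : P.coeff T = (((univ : Finset ({x // x ∈ A} → V))).filter fun f =>
      (∀ v, ((univ : Finset {x // x ∈ A}).filter fun e => f e = v).card = outDeg A v) ∧
      (∀ e : {x // x ∈ A}, cfn G e.val (f e) ≠ 0)).card := by
    rw [hP, GP_coeff]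
    rw [← Finset.sum_boole]
    rw [show (∑ f : {x // x ∈ A} → V, _) = _ from rfl]
    refine Finset.sum_congr rfl fun f _ => ?_
    by_cases h1 : (∑ e : {x // x ∈ A}, Finsupp.single (f e) 1) = T
    · rw [if_pos h1]
      by_cases h2 : ∀ e : {x // x ∈ A}, cfn G e.val (f e) ≠ 0
      · rw [prod_cfn_eq_one G A hadj hodd f ((hgood_iff f).mp h1) h2,
          if_pos ⟨(hgood_iff f).mp h1, h2⟩]
      · push_neg at h2
        obtain ⟨e, he⟩ := h2
        rw [Finset.prod_eq_zero (Finset.mem_univ e) he, if_neg]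
        rintro ⟨_, hall⟩
        exact hall e he
    · rw [if_neg h1, if_neg]
      rintro ⟨hg, _⟩
      exact h1 ((hgood_iff f).mpr hg)
  -- coefficient is nonzero
  have hf0 : (fun e : {x // x ∈ A} => e.val.1) ∈
      ((univ : Finset ({x // x ∈ A} → V))).filter fun f =>
      (∀ v, ((univ : Finset {x // x ∈ A}).filter fun e => f e = v).card = outDeg A v) ∧
      (∀ e : {x // x ∈ A}, cfn G e.val (f e) ≠ 0) := by
    rw [Finset.mem_filter]
    refine ⟨Finset.mem_univ _, fun v => cardAttach A (fun x => x.1 = v), fun e => ?_⟩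
    have h1 : e.val.1 ∈ G.neighborFinset e.val.2 :=
      (G.mem_neighborFinset _ _).mpr (hadj e.val e.2).symm
    have h2 : e.val.1 ∉ G.neighborFinset e.val.1 := by
      rw [G.mem_neighborFinset]
      exact fun h => h.ne rfl
    rw [cfn, if_pos h1, if_neg h2]
    norm_num
  have hcne : P.coeff T ≠ 0 := by
    rw [hcoeff]
    have hpos2 := Finset.card_pos.mpr ⟨_, hf0⟩
    exact ne_of_gt (by exact_mod_cast hpos2)
  -- apply the Nullstellensatz
  set S : V → Finset ℚ := fun v => (L v).image (Nat.cast) with hS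
  have hScard : ∀ v, (S v).card = t v + 1 := by
    intro v
    rw [hS]
    rw [Finset.card_image_of_injective _ Nat.cast_injective]
    exact hL v
  obtain ⟨s, hsmem, hseval⟩ := combNull t S hScard P hdeg hcne
  choose ℓ hℓL hℓcast using fun v => Finset.mem_image.mp (hsmem v)
  refine ⟨ℓ, hℓL, ?_⟩
  intro v w hvw
  have hfactor : ∀ e ∈ A,
      (∑ u ∈ G.neighborFinset e.2, s u) - (∑ u ∈ G.neighborFinset e.1, s u) ≠ 0 := by
    intro e he
    rw [hP, map_prod] at hseval
    have := Finset.prod_ne_zero_iff.mp hseval e he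
    simpa using this
  have hkey : ∀ e ∈ A, ∑ u ∈ G.neighborFinset e.1, ℓ u ≠ ∑ u ∈ G.neighborFinset e.2, ℓ u := by
    intro e he heq
    refine hfactor e he (sub_eq_zero.mpr ?_)
    have hs : ∀ x, s x = ((ℓ x : ℚ)) := fun x => (hℓcast x).symm
    calc ∑ u ∈ G.neighborFinset e.2, s u = ((∑ u ∈ G.neighborFinset e.2, ℓ u : ℕ) : ℚ) := by
          rw [Nat.cast_sum]
          exact Finset.sum_congr rfl fun u _ => hs u
      _ = ((∑ u ∈ G.neighborFinset e.1, ℓ u : ℕ) : ℚ) := by rw [heq]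
      _ = ∑ u ∈ G.neighborFinset e.1, s u := by
          rw [Nat.cast_sum]
          exact (Finset.sum_congr rfl fun u _ => hs u).symm
  rcases (hA.1 v w).mp hvw with hvwA | hwvA
  · exact hkey (v, w) hvwA
  · exact fun h => hkey (w, v) hwvA h.symm
end

section
/- Let G be a bipartite graph and D any orientation of G. If L(v) is a list of d⁺_D(v) + 1 positive integers for each vertex v, then there is an additive coloring of G assigning to each v an element of L(v). -/
open Finset MvPolynomial

section AuxAdditive

lemma key1' (s : Finset ℚ) (k : ℕ) (hk : k < s.card) :
    ∑ x ∈ s, (∏ b ∈ s.erase x, (x - b))⁻¹ * x ^ k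
      = if k = s.card - 1 then 1 else 0 := by
  have hinj : Set.InjOn (id : ℚ → ℚ) s := Function.injective_id.injOn
  have hdeg : ((Polynomial.X : Polynomial ℚ) ^ k).degree < s.card := by
    rw [Polynomial.degree_X_pow]; exact_mod_cast hk
  have h := Lagrange.eq_interpolate (v := id) hinj hdeg
  have h2 := congrArg (fun p => Polynomial.coeff p (s.card - 1)) h
  simp only [Lagrange.interpolate_apply] at h2
  rw [Polynomial.coeff_X_pow] at h2
  rw [Polynomial.finset_sum_coeff] at h2
  have hbc : ∀ x ∈ s, (Polynomial.C (Polynomial.eval (id x) ((Polynomial.X:Polynomial ℚ)^k)) * Lagrange.basis s id x).coeff (s.card - 1)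
      = (∏ b ∈ s.erase x, (x - b))⁻¹ * x ^ k := by
    intro x hx
    rw [Polynomial.coeff_C_mul]
    have hnd : (Lagrange.basis s id x).natDegree = s.card - 1 :=
      Lagrange.natDegree_basis hinj hx
    have hlc : (Lagrange.basis s id x).coeff (s.card - 1) = (∏ b ∈ s.erase x, (x - b))⁻¹ := by
      rw [← hnd, ← Polynomial.leadingCoeff]
      unfold Lagrange.basis
      rw [Polynomial.leadingCoeff_prod]
      rw [← Finset.prod_inv_distrib]
      refine Finset.prod_congr rfl fun b hb => ?_
      have hxb : (id x : ℚ) ≠ id b := by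
        intro hh; exact (Finset.mem_erase.mp hb).1 (by simpa using hh.symm)
      unfold Lagrange.basisDivisor
      rw [Polynomial.leadingCoeff_mul, Polynomial.leadingCoeff_C,
        (Polynomial.monic_X_sub_C _).leadingCoeff, mul_one]
      rfl
    rw [hlc]
    simp [mul_comm]
  rw [Finset.sum_congr rfl hbc] at h2
  rw [← h2]
  simp [eq_comm]

lemma key2' {V : Type*} [Fintype V] [DecidableEq V] (Ls : V → Finset ℚ) (T : V →₀ ℕ)
    (hcard : ∀ v, (Ls v).card = T v + 1) (p : MvPolynomial V ℚ)
    (hdeg : p.totalDegree ≤ ∑ v, T v) :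
    ∑ a ∈ Fintype.piFinset Ls,
        (∏ v, (∏ b ∈ (Ls v).erase (a v), (a v - b))⁻¹) * MvPolynomial.eval a p
      = MvPolynomial.coeff T p := by
  have expand : ∀ a : V → ℚ,
      MvPolynomial.eval a p = ∑ m ∈ p.support, MvPolynomial.coeff m p * ∏ v, a v ^ m v := by
    intro a
    conv_lhs => rw [p.as_sum]
    rw [map_sum]
    refine Finset.sum_congr rfl fun m _ => ?_
    rw [MvPolynomial.eval_monomial]
    congr 1
    exact Finsupp.prod_fintype _ _ (fun v => pow_zero _)
  calc
    ∑ a ∈ Fintype.piFinset Ls,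
        (∏ v, (∏ b ∈ (Ls v).erase (a v), (a v - b))⁻¹) * MvPolynomial.eval a p
      = ∑ a ∈ Fintype.piFinset Ls, ∑ m ∈ p.support,
          MvPolynomial.coeff m p *
            ∏ v, ((∏ b ∈ (Ls v).erase (a v), (a v - b))⁻¹ * a v ^ m v) := by
        refine Finset.sum_congr rfl fun a _ => ?_
        rw [expand a, Finset.mul_sum]
        refine Finset.sum_congr rfl fun m _ => ?_
        rw [Finset.prod_mul_distrib]
        ring
    _ = ∑ m ∈ p.support, MvPolynomial.coeff m p *
          ∑ a ∈ Fintype.piFinset Ls,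
            ∏ v, ((∏ b ∈ (Ls v).erase (a v), (a v - b))⁻¹ * a v ^ m v) := by
        rw [Finset.sum_comm]
        exact Finset.sum_congr rfl fun m _ => (Finset.mul_sum _ _ _).symm
    _ = ∑ m ∈ p.support, MvPolynomial.coeff m p * (if m = T then 1 else 0) := by
        refine Finset.sum_congr rfl fun m hm => ?_
        congr 1
        rw [← Finset.prod_univ_sum (t := Ls) (f := fun v x => (∏ b ∈ (Ls v).erase x, (x - b))⁻¹ * x ^ m v)]
        have hsum : ∑ v, m v ≤ ∑ v, T v := by
          refine le_trans ?_ hdeg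
          have := MvPolynomial.le_totalDegree hm
          rwa [Finsupp.sum_fintype _ _ (fun v => rfl)] at this
        by_cases hmT : m = T
        · subst hmT
          rw [if_pos rfl]
          refine Finset.prod_eq_one fun v _ => ?_
          rw [key1' _ _ (by rw [hcard v]; omega), hcard v, if_pos (by omega)]
        · rw [if_neg hmT]
          have hex : ∃ v0, m v0 < T v0 := by
            by_contra hc
            push_neg at hc
            have hne : ∃ v1, m v1 ≠ T v1 := by
              by_contra hc2; push_neg at hc2
              exact hmT (Finsupp.ext hc2)
            obtain ⟨v1, hv1⟩ := hne
            have : ∑ v, T v < ∑ v, m v :=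
              Finset.sum_lt_sum (fun v _ => hc v)
                ⟨v1, Finset.mem_univ v1, by have := hc v1; omega⟩
            omega
          obtain ⟨v0, hv0⟩ := hex
          refine Finset.prod_eq_zero (Finset.mem_univ v0) ?_
          rw [key1' _ _ (by rw [hcard v0]; omega), hcard v0, if_neg (by omega)]
    _ = MvPolynomial.coeff T p := by
        simp only [mul_ite, mul_one, mul_zero]
        rw [Finset.sum_ite_eq' p.support T (fun m => MvPolynomial.coeff m p)]
        split_ifs with h
        · rfl
        · exact (MvPolynomial.notMem_support_iff.mp h).symm

lemma coeff_scale' {V : Type*} [Fintype V] [DecidableEq V] (c : V → ℚ) (q : MvPolynomial V ℚ)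
    (m : V →₀ ℕ) :
    MvPolynomial.coeff m (MvPolynomial.aeval (fun u => MvPolynomial.C (c u) * MvPolynomial.X u) q)
      = (m.prod fun u k => c u ^ k) * MvPolynomial.coeff m q := by
  induction q using MvPolynomial.induction_on' with
  | monomial m' a =>
    rw [MvPolynomial.aeval_monomial]
    have h : (m'.prod fun u k => (MvPolynomial.C (c u) * MvPolynomial.X u) ^ k)
        = MvPolynomial.C (m'.prod fun u k => c u ^ k) *
            m'.prod fun u k => (MvPolynomial.X u : MvPolynomial V ℚ) ^ k := by
      rw [Finsupp.prod, Finsupp.prod, Finsupp.prod, map_prod, ← Finset.prod_mul_distrib]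
      exact Finset.prod_congr rfl fun u _ => by rw [mul_pow, map_pow]
    have h2 : (m'.prod fun u k => (MvPolynomial.X u : MvPolynomial V ℚ) ^ k)
        = MvPolynomial.monomial m' 1 := by
      rw [MvPolynomial.monomial_eq, map_one, one_mul]
    rw [h, h2, MvPolynomial.algebraMap_eq, ← mul_assoc, ← map_mul, MvPolynomial.C_mul_monomial,
      MvPolynomial.coeff_monomial, MvPolynomial.coeff_monomial]
    split_ifs with hmm
    · subst hmm; ring
    · ring
  | add p q hp hq =>
    rw [map_add, MvPolynomial.coeff_add, hp, hq, MvPolynomial.coeff_add, mul_add]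

lemma coeff_prod_mono' {V ι : Type*} [Fintype V] [DecidableEq V] (s : Finset ι)
    (f g : ι → MvPolynomial V ℚ)
    (h0 : ∀ i ∈ s, ∀ m, 0 ≤ MvPolynomial.coeff m (f i))
    (hle : ∀ i ∈ s, ∀ m, MvPolynomial.coeff m (f i) ≤ MvPolynomial.coeff m (g i)) :
    ∀ m, 0 ≤ MvPolynomial.coeff m (∏ i ∈ s, f i) ∧
      MvPolynomial.coeff m (∏ i ∈ s, f i) ≤ MvPolynomial.coeff m (∏ i ∈ s, g i) := by
  classical
  induction s using Finset.induction_on with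
  | empty =>
    intro m
    simp only [Finset.prod_empty]
    constructor
    · rw [MvPolynomial.coeff_one]; split_ifs <;> norm_num
    · exact le_refl _
  | @insert i s hi ih =>
    intro m
    have hf := fun j hj => h0 j (Finset.mem_insert_of_mem hj)
    have hg := fun j hj => hle j (Finset.mem_insert_of_mem hj)
    have ihm := ih hf hg
    rw [Finset.prod_insert hi, Finset.prod_insert hi, MvPolynomial.coeff_mul,
      MvPolynomial.coeff_mul]
    constructor
    · exact Finset.sum_nonneg fun x _ =>
        mul_nonneg (h0 i (Finset.mem_insert_self i s) x.1) (ihm x.2).1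
    · refine Finset.sum_le_sum fun x _ => ?_
      exact mul_le_mul (hle i (Finset.mem_insert_self i s) x.1) (ihm x.2).2 (ihm x.2).1
        (le_trans (h0 i (Finset.mem_insert_self i s) x.1)
          (hle i (Finset.mem_insert_self i s) x.1))

lemma prod_X_fst {V : Type*} [Fintype V] [DecidableEq V] (A : Finset (V × V)) :
    (∏ e ∈ A, (MvPolynomial.X e.1 : MvPolynomial V ℚ))
      = MvPolynomial.monomial (∑ e ∈ A, Finsupp.single e.1 1) 1 := by
  induction A using Finset.induction_on with
  | empty => simp
  | @insert a s ha ih =>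
    rw [Finset.prod_insert ha, Finset.sum_insert ha, ih, MvPolynomial.X,
      MvPolynomial.monomial_mul, mul_one]

lemma fin2_eq_of_ne (a b c : Fin 2) (h1 : a ≠ c) (h2 : b ≠ c) : a = b := by
  fin_cases a <;> fin_cases b <;> fin_cases c <;> simp_all

lemma fin2_neg_of_ne (a b : Fin 2) (h : a ≠ b) :
    ((-1 : ℚ)) ^ (a : ℕ) = -(-1 : ℚ) ^ (b : ℕ) := by
  fin_cases a <;> fin_cases b <;> simp_all

end AuxAdditive

/-- Every bipartite graph admits an additive coloring from any lists of `d⁺_D(v) + 1`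
positive integers, for any orientation `D`. -/
theorem additive_coloring_bipartite {V : Type*} [Fintype V] [DecidableEq V]
    (G : SimpleGraph V) [DecidableRel G.Adj] (hbip : G.Colorable 2)
    (A : Finset (V × V)) (hA : IsOrientation G A)
    (L : V → Finset ℕ) (hpos : ∀ v, ∀ k ∈ L v, 0 < k)
    (hL : ∀ v, (L v).card = outDeg A v + 1) :
    ∃ ℓ : V → ℕ, (∀ v, ℓ v ∈ L v) ∧ IsAdditiveColoring G ℓ := by
  classical
  obtain ⟨col⟩ := hbip
  set ε : V → ℚ := fun u => (-1 : ℚ) ^ ((col u : Fin 2) : ℕ) with hε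
  have hεne : ∀ u, ε u ≠ 0 := fun u => pow_ne_zero _ (by norm_num)
  set N : V → Finset V := fun v => G.neighborFinset v with hN
  set F : V × V → MvPolynomial V ℚ := fun e =>
    (∑ u ∈ N e.1, MvPolynomial.X u) - (∑ u ∈ N e.2, MvPolynomial.X u) with hF
  set P : MvPolynomial V ℚ := ∏ e ∈ A, F e with hP
  set S : V × V → Finset V := fun e => N e.1 ∪ N e.2 with hS
  set Q : MvPolynomial V ℚ := ∏ e ∈ A, (∑ u ∈ S e, MvPolynomial.X u) with hQ
  set T : V →₀ ℕ := ∑ e ∈ A, Finsupp.single e.1 1 with hT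
  -- basic facts about arcs
  have hadj : ∀ e ∈ A, G.Adj e.1 e.2 := fun e he => (hA.1 e.1 e.2).mpr (Or.inl he)
  have hdisj : ∀ e ∈ A, Disjoint (N e.1) (N e.2) := by
    intro e he
    rw [Finset.disjoint_left]
    intro u h1 h2
    rw [hN, SimpleGraph.mem_neighborFinset] at h1 h2
    exact col.valid (hadj e he)
      (fin2_eq_of_ne _ _ _ (col.valid h1) (col.valid h2))
  have hmem1 : ∀ e ∈ A, e.1 ∈ N e.2 := by
    intro e he
    rw [hN, SimpleGraph.mem_neighborFinset]
    exact (hadj e he).symm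
  -- T v = outDeg A v
  have hTv : ∀ v, T v = outDeg A v := by
    intro v
    rw [hT, Finsupp.finset_sum_apply]
    rw [outDeg, Finset.card_filter]
    exact Finset.sum_congr rfl fun e _ => by rw [Finsupp.single_apply]
  -- sum of T = card A
  have hTsum : ∑ v, T v = A.card := by
    have : ∑ v, T v = ∑ e ∈ A, ∑ v, (Finsupp.single e.1 1 : V →₀ ℕ) v := by
      rw [Finset.sum_comm]
      exact Finset.sum_congr rfl fun v _ => by rw [hT, Finsupp.finset_sum_apply]
    have h2 : ∀ e : V × V, ∑ v, ((Finsupp.single e.1 1 : V →₀ ℕ) v) = 1 := by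
      intro e
      simp [Finsupp.single_apply]
    rw [this]
    simp [h2]
  -- factor identity
  have hfac : ∀ e ∈ A,
      (∑ u ∈ S e, MvPolynomial.C (ε u) * MvPolynomial.X u)
        = MvPolynomial.C (ε e.2) * F e := by
    intro e he
    have h1 : ∀ u ∈ N e.1, ε u = ε e.2 := by
      intro u hu
      rw [hN, SimpleGraph.mem_neighborFinset] at hu
      rw [hε]
      exact congrArg _ (congrArg _ (fin2_eq_of_ne _ _ _ (col.valid hu.symm)
        (col.valid (G.adj_symm (hadj e he)))))
    have h2 : ∀ u ∈ N e.2, ε u = -ε e.2 := by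
      intro u hu
      rw [hN, SimpleGraph.mem_neighborFinset] at hu
      exact fin2_neg_of_ne _ _ (col.valid hu.symm)
    have e1 : ∑ u ∈ N e.1, MvPolynomial.C (ε u) * MvPolynomial.X u
        = MvPolynomial.C (ε e.2) * ∑ u ∈ N e.1, MvPolynomial.X u := by
      rw [Finset.mul_sum]
      exact Finset.sum_congr rfl fun u hu => by rw [h1 u hu]
    have e2 : ∑ u ∈ N e.2, MvPolynomial.C (ε u) * MvPolynomial.X u
        = -(MvPolynomial.C (ε e.2) * ∑ u ∈ N e.2, MvPolynomial.X u) := by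
      calc ∑ u ∈ N e.2, MvPolynomial.C (ε u) * MvPolynomial.X u
          = ∑ u ∈ N e.2, -(MvPolynomial.C (ε e.2) * MvPolynomial.X u) :=
            Finset.sum_congr rfl fun u hu => by rw [h2 u hu, map_neg, neg_mul]
        _ = -(MvPolynomial.C (ε e.2) * ∑ u ∈ N e.2, MvPolynomial.X u) := by
            rw [Finset.sum_neg_distrib, Finset.mul_sum]
    rw [hS, Finset.sum_union (hdisj e he), e1, e2, hF, mul_sub, ← sub_eq_add_neg]
  -- coeff T Q ≥ 1
  have hQcoeff : (1 : ℚ) ≤ MvPolynomial.coeff T Q := by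
    have hmono := coeff_prod_mono' A (fun e => MvPolynomial.X e.1)
      (fun e => ∑ u ∈ S e, MvPolynomial.X u)
      (fun e _ m => by rw [MvPolynomial.coeff_X']; split_ifs <;> norm_num)
      (fun e he m => by
        rw [MvPolynomial.coeff_sum]
        exact Finset.single_le_sum (f := fun u =>
            MvPolynomial.coeff m (MvPolynomial.X u : MvPolynomial V ℚ))
          (fun u _ => by rw [MvPolynomial.coeff_X']; split_ifs <;> norm_num)
          (Finset.mem_union_right _ (hmem1 e he)))
    have h1 : MvPolynomial.coeff T (∏ e ∈ A, (MvPolynomial.X e.1 : MvPolynomial V ℚ)) = 1 := by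
      rw [prod_X_fst, ← hT, MvPolynomial.coeff_monomial, if_pos rfl]
    calc (1:ℚ) = MvPolynomial.coeff T (∏ e ∈ A, (MvPolynomial.X e.1 : MvPolynomial V ℚ)) :=
          h1.symm
      _ ≤ MvPolynomial.coeff T Q := (hmono T).2
  -- relate coeff T P and coeff T Q
  have hQ' : (∏ e ∈ A, (∑ u ∈ S e, MvPolynomial.C (ε u) * MvPolynomial.X u))
      = MvPolynomial.C (∏ e ∈ A, ε e.2) * P := by
    rw [Finset.prod_congr rfl hfac, Finset.prod_mul_distrib, map_prod, hP]
  have hQ'2 : (∏ e ∈ A, (∑ u ∈ S e, MvPolynomial.C (ε u) * MvPolynomial.X u))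
      = MvPolynomial.aeval (fun u => MvPolynomial.C (ε u) * MvPolynomial.X u) Q := by
    rw [hQ, map_prod]
    refine Finset.prod_congr rfl fun e _ => ?_
    rw [map_sum]
    exact Finset.sum_congr rfl fun u _ => by rw [MvPolynomial.aeval_X]
  have hPcoeff : MvPolynomial.coeff T P ≠ 0 := by
    have heq : (∏ e ∈ A, ε e.2) * MvPolynomial.coeff T P
        = (T.prod fun u k => ε u ^ k) * MvPolynomial.coeff T Q := by
      rw [← MvPolynomial.coeff_C_mul, ← hQ', hQ'2, coeff_scale']
    intro h0
    rw [h0, mul_zero] at heq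
    have h1 : (T.prod fun u k => ε u ^ k) ≠ 0 :=
      Finset.prod_ne_zero_iff.mpr fun u _ => pow_ne_zero _ (hεne u)
    exact absurd heq.symm (mul_ne_zero h1 (zero_lt_one.trans_le hQcoeff).ne')
  -- degree bound
  have hdeg : P.totalDegree ≤ ∑ v, T v := by
    rw [hTsum]
    calc P.totalDegree ≤ ∑ e ∈ A, (F e).totalDegree :=
          MvPolynomial.totalDegree_finset_prod A F
      _ ≤ ∑ e ∈ A, 1 := by
          refine Finset.sum_le_sum fun e _ => ?_
          rw [hF]
          refine le_trans (MvPolynomial.totalDegree_sub _ _) (max_le ?_ ?_) <;>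
            exact MvPolynomial.totalDegree_finsetSum_le
              fun u _ => le_of_eq (MvPolynomial.totalDegree_X u)
      _ = A.card := by rw [Finset.sum_const, smul_eq_mul, mul_one]
  -- apply key2'
  set Ls : V → Finset ℚ := fun v => (L v).image (Nat.cast : ℕ → ℚ) with hLs
  have hcard : ∀ v, (Ls v).card = T v + 1 := by
    intro v
    rw [hLs]
    rw [Finset.card_image_of_injective _ Nat.cast_injective, hL v, hTv v]
  have hkey := key2' Ls T hcard P hdeg
  obtain ⟨a, hamem, hane⟩ : ∃ a ∈ Fintype.piFinset Ls,
      (∏ v, (∏ b ∈ (Ls v).erase (a v), (a v - b))⁻¹) * MvPolynomial.eval a P ≠ 0 := by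
    by_contra hc
    push_neg at hc
    exact hPcoeff (by rw [← hkey]; exact Finset.sum_eq_zero hc)
  have hevalP : MvPolynomial.eval a P ≠ 0 := fun h => hane (by rw [h, mul_zero])
  -- extract integer lists
  have hmem' : ∀ v, a v ∈ Ls v := fun v => (Fintype.mem_piFinset).mp hamem v
  choose ℓ hℓmem hℓcast using fun v => Finset.mem_image.mp (hmem' v)
  refine ⟨ℓ, hℓmem, ?_⟩
  -- additive coloring
  have hfactor : ∀ e ∈ A,
      ∑ u ∈ G.neighborFinset e.1, ℓ u ≠ ∑ u ∈ G.neighborFinset e.2, ℓ u := by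
    intro e he heq
    have := Finset.prod_ne_zero_iff.mp (by rwa [hP, map_prod] at hevalP) e he
    apply this
    rw [hF]
    simp only [map_sub, map_sum, MvPolynomial.eval_X]
    have hs : ∀ w : V, ∑ u ∈ N w, a u = ((∑ u ∈ G.neighborFinset w, ℓ u : ℕ) : ℚ) := by
      intro w
      rw [Nat.cast_sum, hN]
      exact Finset.sum_congr rfl fun u _ => (hℓcast u).symm
    rw [hs, hs, heq, sub_self]
  intro v w hvw
  rcases (hA.1 v w).mp hvw with h | h
  · exact hfactor (v, w) h
  · exact (hfactor (w, v) h).symm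
end

section
/- Let G be a tripartite graph (properly 3-colorable with color classes A, B, C) admitting an orientation D such that every vertex in one of the color classes is simplicial in G and has out-degree 0 in D. If L(v) is a list of d⁺_D(v) + 1 positive integers for each v, then G admits an additive coloring assigning to each v an element of L(v). In particular, η_ℓ(G) ≤ Δ(G) + 1 for such G. -/
open Finset MvPolynomial

lemma onedim (L : Finset ℚ) (t m : ℕ) (hc : L.card = t + 1) (hm : m ≤ t) :
    ∑ a ∈ L, Lagrange.nodalWeight L id a * a ^ m = if m = t then 1 else 0 := by
  have hinj : Set.InjOn id (L : Set ℚ) := Function.injective_id.injOn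
  have hdeg : (Polynomial.X ^ m : Polynomial ℚ).degree < L.card := by
    rw [Polynomial.degree_X_pow, hc]
    exact_mod_cast Nat.lt_succ_of_le hm
  have hI := Lagrange.eq_interpolate hinj hdeg
  have hcoeff := congrArg (fun p : Polynomial ℚ => p.coeff t) hI
  simp only [Lagrange.interpolate_apply, Polynomial.coeff_X_pow, Polynomial.finset_sum_coeff,
    Polynomial.coeff_C_mul] at hcoeff
  have hb : ∀ a ∈ L, (Lagrange.basis L id a).coeff t = Lagrange.nodalWeight L id a := by
    intro a ha
    rw [Lagrange.basis_eq_prod_sub_inv_mul_nodal_div ha, ← Lagrange.nodal_erase_eq_nodal_div ha,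
      Polynomial.coeff_C_mul]
    have hmonic : (Lagrange.nodal (L.erase a) id).Monic := Lagrange.nodal_monic
    have hnd : (Lagrange.nodal (L.erase a) id).natDegree = t := by
      rw [Lagrange.natDegree_nodal, card_erase_of_mem ha, hc]
      omega
    rw [← hnd, hmonic.coeff_natDegree, mul_one]
  calc ∑ a ∈ L, Lagrange.nodalWeight L id a * a ^ m
      = ∑ a ∈ L, (Polynomial.X ^ m : Polynomial ℚ).eval (id a) * (Lagrange.basis L id a).coeff t := by
        refine Finset.sum_congr rfl fun a ha => ?_
        rw [hb a ha, Polynomial.eval_pow, Polynomial.eval_X, id, mul_comm]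
    _ = if m = t then 1 else 0 := by
        rw [← hcoeff]
        simp [eq_comm]

lemma grid_lemma {V : Type*} [Fintype V] [DecidableEq V] (T : V →₀ ℕ) (L : V → Finset ℚ)
    (hL : ∀ v, (L v).card = T v + 1) (P : MvPolynomial V ℚ)
    (hdeg : P.totalDegree ≤ ∑ v, T v) (hco : MvPolynomial.coeff T P ≠ 0) :
    ∃ x ∈ Fintype.piFinset L, MvPolynomial.eval x P ≠ 0 := by
  by_contra hall
  push_neg at hall
  apply hco
  have key : ∑ x ∈ Fintype.piFinset L,
      (∏ v, Lagrange.nodalWeight (L v) id (x v)) * MvPolynomial.eval x P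
      = MvPolynomial.coeff T P := by
    calc ∑ x ∈ Fintype.piFinset L,
        (∏ v, Lagrange.nodalWeight (L v) id (x v)) * MvPolynomial.eval x P
        = ∑ x ∈ Fintype.piFinset L, ∑ d ∈ P.support,
            MvPolynomial.coeff d P * ∏ v, (Lagrange.nodalWeight (L v) id (x v) * x v ^ d v) := by
          refine Finset.sum_congr rfl fun x _ => ?_
          rw [MvPolynomial.eval_eq', Finset.mul_sum]
          refine Finset.sum_congr rfl fun d _ => ?_
          rw [Finset.prod_mul_distrib]
          ring
      _ = ∑ d ∈ P.support, MvPolynomial.coeff d P *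
            ∏ v, ∑ a ∈ L v, (Lagrange.nodalWeight (L v) id a * a ^ d v) := by
          rw [Finset.sum_comm]
          refine Finset.sum_congr rfl fun d _ => ?_
          rw [← Finset.mul_sum]
          congr 1
          exact (Finset.prod_univ_sum (fun v => L v)
            (fun v a => Lagrange.nodalWeight (L v) id a * a ^ d v)).symm
      _ = ∑ d ∈ P.support, MvPolynomial.coeff d P * (if d = T then 1 else 0) := by
          refine Finset.sum_congr rfl fun d hd => ?_
          congr 1
          have hsum : ∑ v, d v ≤ ∑ v, T v := by
            refine le_trans ?_ hdeg
            refine le_trans (le_of_eq ?_) (MvPolynomial.le_totalDegree hd)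
            rw [Finsupp.sum_fintype]
            intro _; rfl
          by_cases hdT : d = T
          · rw [if_pos hdT, hdT]
            refine Finset.prod_eq_one fun v _ => ?_
            rw [onedim (L v) (T v) (T v) (hL v) le_rfl, if_pos rfl]
          · rw [if_neg hdT]
            have hex : ∃ v, d v < T v := by
              by_contra hno
              push_neg at hno
              apply hdT
              ext v
              by_contra hne
              have h1 : T v < d v := lt_of_le_of_ne (hno v) (Ne.symm hne)
              have h2 : ∑ v, T v < ∑ v, d v :=
                Finset.sum_lt_sum (fun i _ => hno i) ⟨v, Finset.mem_univ v, h1⟩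
              omega
            obtain ⟨v, hv⟩ := hex
            refine Finset.prod_eq_zero (Finset.mem_univ v) ?_
            rw [onedim (L v) (T v) (d v) (hL v) (le_of_lt hv), if_neg (Nat.ne_of_lt hv)]
      _ = MvPolynomial.coeff T P := by
          rw [Finset.sum_eq_single T (fun b _ hb => by rw [if_neg hb, mul_zero])
            (fun h => by rw [MvPolynomial.notMem_support_iff.mp h, zero_mul])]
          rw [if_pos rfl, mul_one]
  rw [← key]
  refine Finset.sum_eq_zero fun x hx => ?_
  rw [hall x hx, mul_zero]

section Helpers

variable {V : Type*} [Fintype V] [DecidableEq V] (G : SimpleGraph V) [DecidableRel G.Adj]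

/-- weight of variable `u` in the linear form attached to arc `e`. -/
def wgt (e : V × V) (u : V) : ℚ :=
  (if u ∈ G.neighborFinset e.2 then 1 else 0) - (if u ∈ G.neighborFinset e.1 then 1 else 0)

noncomputable def Pol (A : Finset (V × V)) : MvPolynomial V ℚ :=
  ∏ e ∈ A, (∑ u : V, MvPolynomial.C (wgt G e u) * MvPolynomial.X u)

noncomputable def TT (A : Finset (V × V)) : V →₀ ℕ :=
  Finsupp.equivFunOnFinite.symm fun v => outDeg A v

@[simp] lemma TT_apply (A : Finset (V × V)) (v : V) : TT A v = outDeg A v := rfl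

lemma eval_Pol (A : Finset (V × V)) (x : V → ℚ) :
    MvPolynomial.eval x (Pol G A) =
      ∏ e ∈ A, ((∑ u ∈ G.neighborFinset e.2, x u) - ∑ u ∈ G.neighborFinset e.1, x u) := by
  rw [Pol, map_prod]
  refine Finset.prod_congr rfl fun e _ => ?_
  rw [map_sum]
  have : ∀ u : V, MvPolynomial.eval x (MvPolynomial.C (wgt G e u) * MvPolynomial.X u)
      = (if u ∈ G.neighborFinset e.2 then x u else 0)
        - (if u ∈ G.neighborFinset e.1 then x u else 0) := by
    intro u
    simp [wgt, sub_mul, ite_mul, apply_ite (MvPolynomial.eval x)]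
  rw [Finset.sum_congr rfl fun u _ => this u, Finset.sum_sub_distrib,
    Finset.sum_ite_mem, Finset.sum_ite_mem, Finset.univ_inter, Finset.univ_inter]

lemma totalDegree_Pol (A : Finset (V × V)) : (Pol G A).totalDegree ≤ A.card := by
  refine le_trans (MvPolynomial.totalDegree_finset_prod _ _) ?_
  rw [Finset.card_eq_sum_ones]
  refine Finset.sum_le_sum fun e _ => ?_
  refine le_trans (MvPolynomial.totalDegree_finset_sum _ _) ?_
  refine Finset.sup_le fun u _ => ?_
  refine le_trans (MvPolynomial.totalDegree_mul _ _) ?_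
  simp [MvPolynomial.totalDegree_C, MvPolynomial.totalDegree_X]

lemma card_eq_sum_outDeg (A : Finset (V × V)) : A.card = ∑ v : V, outDeg A v :=
  Finset.card_eq_sum_card_fiberwise fun e _ => Finset.mem_univ e.1

lemma prod_X_monomial {ι : Type*} (s : Finset ι) (g : ι → V) :
    (∏ i ∈ s, (MvPolynomial.X (g i) : MvPolynomial V ℚ))
      = MvPolynomial.monomial (∑ i ∈ s, Finsupp.single (g i) 1) 1 := by
  classical
  induction s using Finset.cons_induction with
  | empty => simp
  | cons a s ha ih =>
      rw [Finset.prod_cons, Finset.sum_cons, ih, MvPolynomial.X,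
        MvPolynomial.monomial_mul, one_mul]

lemma coeff_Pol (A : Finset (V × V)) :
    MvPolynomial.coeff (TT A) (Pol G A) =
      ∑ σ ∈ (Finset.univ : Finset ({e // e ∈ A} → V)),
        if (∑ i : {e // e ∈ A}, Finsupp.single (σ i) 1) = TT A
        then ∏ i : {e // e ∈ A}, wgt G i.1 (σ i) else 0 := by
  have h1 : Pol G A = ∏ i : {e // e ∈ A},
      (∑ u : V, MvPolynomial.C (wgt G i.1 u) * MvPolynomial.X u) := by
    rw [Pol, Finset.univ_eq_attach, Finset.prod_attach A
      (fun e => ∑ u : V, MvPolynomial.C (wgt G e u) * MvPolynomial.X u)]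
  rw [h1]
  have h2 : (∏ i : {e // e ∈ A}, ∑ u : V, MvPolynomial.C (wgt G i.1 u) * MvPolynomial.X u)
      = ∑ σ ∈ Fintype.piFinset (fun _ : {e // e ∈ A} => (Finset.univ : Finset V)),
          ∏ i : {e // e ∈ A}, (MvPolynomial.C (wgt G i.1 (σ i)) * MvPolynomial.X (σ i)) := by
    exact Finset.prod_univ_sum _ _
  rw [h2, Fintype.piFinset_univ, MvPolynomial.coeff_sum]
  refine Finset.sum_congr rfl fun σ _ => ?_
  rw [Finset.prod_mul_distrib, ← map_prod, prod_X_monomial, MvPolynomial.coeff_C_mul,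
    MvPolynomial.coeff_monomial]
  by_cases h : (∑ i : {e // e ∈ A}, Finsupp.single (σ i) 1) = TT A
  · rw [if_pos h, if_pos h, mul_one]
  · rw [if_neg h, if_neg h, mul_zero]

end Helpers

lemma fin3_eq (i a b c : Fin 3) (h1 : a ≠ i) (h2 : b ≠ i) (h3 : c ≠ i) (h4 : a ≠ c)
    (h5 : b ≠ c) : a = b := by omega

lemma fin3_phi_eq (i a b : Fin 3) (h : a = b) :
    (if a = i + 1 then (0 : ZMod 2) else 1) + (if b = i + 1 then 0 else 1) = 0 := by
  subst h; by_cases ha : a = i + 1 <;> simp [ha] <;> decide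

lemma fin3_phi_ne (i a b : Fin 3) (h1 : a ≠ i) (h2 : b ≠ i) (h3 : a ≠ b) :
    (if a = i + 1 then (0 : ZMod 2) else 1) + (if b = i + 1 then 0 else 1) = 1 := by
  fin_cases i <;> fin_cases a <;> fin_cases b <;> simp_all <;> decide

section Core

variable {V : Type*} [Fintype V] [DecidableEq V] (G : SimpleGraph V) [DecidableRel G.Adj]

lemma perarc (Col : G.Coloring (Fin 3)) (i : Fin 3) (A : Finset (V × V))
    (hA : IsOrientation G A)
    (hclass : ∀ v, Col v = i → G.IsClique (G.neighborSet v) ∧ outDeg A v = 0)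
    (e : V × V) (he : e ∈ A) (u : V) (hw : wgt G e u ≠ 0) (hu : Col u ≠ i) :
    (if wgt G e u = -1 then (1 : ZMod 2) else 0)
      = (if Col u = i + 1 then (0 : ZMod 2) else 1)
        + (if Col e.1 = i + 1 then (0 : ZMod 2) else 1) := by
  have hadj : G.Adj e.1 e.2 := (hA.1 e.1 e.2).mpr (Or.inl he)
  have he1 : Col e.1 ≠ i := by
    intro h
    have h0 := (hclass e.1 h).2
    have hmem : e ∈ A.filter (fun p => p.1 = e.1) := Finset.mem_filter.mpr ⟨he, rfl⟩
    rw [outDeg, Finset.card_eq_zero] at h0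
    rw [h0] at hmem
    exact Finset.notMem_empty e hmem
  by_cases h2 : u ∈ G.neighborFinset e.2 <;> by_cases h1 : u ∈ G.neighborFinset e.1
  · exact absurd (by simp [wgt, h1, h2]) hw
  · -- wgt = 1 : need colors of u and e.1 equal
    have hw1 : wgt G e u = 1 := by simp [wgt, h1, h2]
    rw [hw1, if_neg (by norm_num)]
    refine (fin3_phi_eq i (Col u) (Col e.1) ?_).symm
    by_cases hue : u = e.1
    · rw [hue]
    · by_cases hce2 : Col e.2 = i
      · exfalso
        have hclq := (hclass e.2 hce2).1
        have hu2 : u ∈ G.neighborSet e.2 := (SimpleGraph.mem_neighborFinset _ _ _).mp h2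
        have he12 : e.1 ∈ G.neighborSet e.2 := hadj.symm
        have hadj' : G.Adj u e.1 := hclq hu2 he12 hue
        exact h1 ((SimpleGraph.mem_neighborFinset _ _ _).mpr hadj'.symm)
      · refine fin3_eq i (Col u) (Col e.1) (Col e.2) hu he1 hce2 ?_ ?_
        · exact (Col.valid ((SimpleGraph.mem_neighborFinset _ _ _).mp h2)).symm
        · exact Col.valid hadj
  · -- wgt = -1 : colors of u and e.1 differ
    have hw1 : wgt G e u = -1 := by simp [wgt, h1, h2]
    rw [hw1, if_pos rfl]
    refine (fin3_phi_ne i (Col u) (Col e.1) hu he1 ?_).symm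
    exact (Col.valid ((SimpleGraph.mem_neighborFinset _ _ _).mp h1)).symm
  · exact absurd (by simp [wgt, h1, h2]) hw

end Core

section Core2

variable {V : Type*} [Fintype V] [DecidableEq V] (G : SimpleGraph V) [DecidableRel G.Adj]

lemma wgt_sign_one (Col : G.Coloring (Fin 3)) (i : Fin 3) (A : Finset (V × V))
    (hA : IsOrientation G A)
    (hclass : ∀ v, Col v = i → G.IsClique (G.neighborSet v) ∧ outDeg A v = 0)
    (σ : {e // e ∈ A} → V)
    (hσ : (∑ j : {e // e ∈ A}, Finsupp.single (σ j) 1) = TT A)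
    (hz : ∀ j : {e // e ∈ A}, wgt G j.1 (σ j) ≠ 0) :
    ∏ j : {e // e ∈ A}, wgt G j.1 (σ j) = 1 := by
  classical
  set φ : V → ZMod 2 := fun v => if Col v = i + 1 then 0 else 1 with hφ
  have hcol : ∀ j : {e // e ∈ A}, Col (σ j) ≠ i := by
    intro j hcoli
    have h0 : outDeg A (σ j) = 0 := (hclass _ hcoli).2
    have h1 : (1 : ℕ) ≤ (∑ k : {e // e ∈ A}, Finsupp.single (σ k) 1) (σ j) := by
      rw [Finsupp.finset_sum_apply]
      have := Finset.single_le_sum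
        (f := fun k : {e // e ∈ A} => (Finsupp.single (σ k) (1:ℕ)) (σ j))
        (fun k _ => Nat.zero_le _) (Finset.mem_univ j)
      simpa [Finsupp.single_eq_same] using this
    rw [hσ, TT_apply, h0] at h1
    omega
  have hsum_eq : ∑ j : {e // e ∈ A}, φ (σ j) = ∑ j : {e // e ∈ A}, φ (j.1.1) := by
    have h := congrArg (fun f : V →₀ ℕ => ∑ v : V, ((f v : ℕ) : ZMod 2) * φ v) hσ
    simp only [Finsupp.finset_sum_apply, Nat.cast_sum, Finset.sum_mul] at h
    rw [Finset.sum_comm] at h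
    have hL : ∀ j : {e // e ∈ A},
        ∑ v : V, ((Finsupp.single (σ j) (1:ℕ)) v : ZMod 2) * φ v = φ (σ j) := by
      intro j
      rw [Finset.sum_eq_single (σ j)]
      · rw [Finsupp.single_eq_same]; norm_num
      · intro b _ hb
        rw [Finsupp.single_eq_of_ne' (Ne.symm hb)]
        norm_num
      · intro hb
        exact absurd (Finset.mem_univ _) hb
    rw [Finset.sum_congr rfl fun j _ => hL j] at h
    have hR : ∑ v : V, ((TT A v : ℕ) : ZMod 2) * φ v = ∑ j : {e // e ∈ A}, φ (j.1.1) := by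
      have houtd : ∀ v : V, (TT A v : ℕ) = ∑ e ∈ A, if e.1 = v then 1 else 0 := by
        intro v
        rw [TT_apply, outDeg, Finset.card_filter]
      rw [Finset.sum_congr rfl fun v _ => by rw [houtd v]]
      simp only [Nat.cast_sum, Finset.sum_mul]
      rw [Finset.sum_comm]
      have hinner : ∀ e : V × V, ∑ x : V,
          (Nat.cast (R := ZMod 2) (if e.1 = x then 1 else 0)) * φ x = φ e.1 := by
        intro e
        rw [Finset.sum_eq_single e.1]
        · rw [if_pos rfl]; norm_num
        · intro b _ hb
          rw [if_neg (Ne.symm hb)]; norm_num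
        · intro hb
          exact absurd (Finset.mem_univ _) hb
      rw [Finset.sum_congr rfl fun e _ => hinner e, Finset.univ_eq_attach]
      exact (Finset.sum_attach A fun e => φ e.1).symm
    rw [hR] at h
    exact h
  have hcard : ((Finset.univ.filter
      (fun j : {e // e ∈ A} => wgt G j.1 (σ j) = -1)).card : ZMod 2) = 0 := by
    rw [Finset.natCast_card_filter]
    have := fun (j : {e // e ∈ A}) => perarc G Col i A hA hclass j.1 j.2 (σ j) (hz j) (hcol j)
    rw [Finset.sum_congr rfl fun j _ => this j, Finset.sum_add_distrib, hsum_eq, ← two_mul]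
    rw [show ((2 : ZMod 2)) = 0 by decide, zero_mul]
  have heven : Even (Finset.univ.filter
      (fun j : {e // e ∈ A} => wgt G j.1 (σ j) = -1)).card := by
    obtain ⟨c, hc⟩ := (ZMod.natCast_eq_zero_iff _ 2).mp hcard
    exact ⟨c, by omega⟩
  have hprod : ∏ j : {e // e ∈ A}, wgt G j.1 (σ j)
      = ∏ j : {e // e ∈ A}, (if wgt G j.1 (σ j) = -1 then (-1 : ℚ) else 1) := by
    refine Finset.prod_congr rfl fun j _ => ?_
    by_cases hj : wgt G j.1 (σ j) = -1
    · rw [if_pos hj, hj]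
    · rw [if_neg hj]
      by_cases h2 : σ j ∈ G.neighborFinset (j.1).2 <;>
        by_cases h1 : σ j ∈ G.neighborFinset (j.1).1
      · exact absurd (by simp [wgt, h1, h2]) (hz j)
      · simp [wgt, h1, h2]
      · exact absurd (by simp [wgt, h1, h2]) hj
      · exact absurd (by simp [wgt, h1, h2]) (hz j)
  rw [hprod, Finset.prod_ite _ _, Finset.prod_const, Finset.prod_const, one_pow, mul_one,
    Even.neg_one_pow heven]

end Core2

section Core3

variable {V : Type*} [Fintype V] [DecidableEq V] (G : SimpleGraph V) [DecidableRel G.Adj]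

lemma coeff_Pol_pos (Col : G.Coloring (Fin 3)) (i : Fin 3) (A : Finset (V × V))
    (hA : IsOrientation G A)
    (hclass : ∀ v, Col v = i → G.IsClique (G.neighborSet v) ∧ outDeg A v = 0) :
    0 < MvPolynomial.coeff (TT A) (Pol G A) := by
  rw [coeff_Pol]
  refine Finset.sum_pos' ?_ ?_
  · intro σ _
    by_cases hc : (∑ j : {e // e ∈ A}, Finsupp.single (σ j) 1) = TT A
    · rw [if_pos hc]
      by_cases hz : ∀ j : {e // e ∈ A}, wgt G j.1 (σ j) ≠ 0
      · rw [wgt_sign_one G Col i A hA hclass σ hc hz]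
        norm_num
      · push_neg at hz
        obtain ⟨j, hj⟩ := hz
        rw [Finset.prod_eq_zero (Finset.mem_univ j) hj]
    · rw [if_neg hc]
  · refine ⟨fun j => j.1.1, Finset.mem_univ _, ?_⟩
    have hc : (∑ j : {e // e ∈ A}, Finsupp.single (j.1.1) (1:ℕ)) = TT A := by
      ext v
      rw [Finsupp.finset_sum_apply, TT_apply, outDeg, Finset.card_filter,
        Finset.univ_eq_attach]
      rw [Finset.sum_congr rfl fun j _ => (Finsupp.single_apply :
        (Finsupp.single (j.1.1) (1:ℕ)) v = if j.1.1 = v then 1 else 0)]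
      exact Finset.sum_attach A fun e => if e.1 = v then 1 else 0
    rw [if_pos hc]
    have hone : ∀ j : {e // e ∈ A}, wgt G j.1 (j.1.1) = 1 := by
      intro j
      have hadj : G.Adj j.1.1 j.1.2 := (hA.1 _ _).mpr (Or.inl j.2)
      have h2 : j.1.1 ∈ G.neighborFinset j.1.2 :=
        (SimpleGraph.mem_neighborFinset _ _ _).mpr hadj.symm
      have h1 : j.1.1 ∉ G.neighborFinset j.1.1 :=
        SimpleGraph.notMem_neighborFinset_self G _
      simp [wgt, h1, h2]
    rw [Finset.prod_congr rfl fun j _ => hone j, Finset.prod_const_one]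
    norm_num

lemma main_exists (Col : G.Coloring (Fin 3)) (i : Fin 3) (A : Finset (V × V))
    (hA : IsOrientation G A)
    (hclass : ∀ v, Col v = i → G.IsClique (G.neighborSet v) ∧ outDeg A v = 0)
    (L : V → Finset ℕ) (hcard : ∀ v, (L v).card = outDeg A v + 1) :
    ∃ ℓ : V → ℕ, (∀ v, ℓ v ∈ L v) ∧ ∀ v w, G.Adj v w →
      (∑ u ∈ G.neighborFinset v, ℓ u) ≠ ∑ u ∈ G.neighborFinset w, ℓ u := by
  classical
  have hLcard : ∀ v, ((L v).image (fun n : ℕ => (n : ℚ))).card = TT A v + 1 := by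
    intro v
    rw [Finset.card_image_of_injective _ Nat.cast_injective, hcard v, TT_apply]
  have hdeg : (Pol G A).totalDegree ≤ ∑ v : V, TT A v := by
    refine le_trans (totalDegree_Pol G A) ?_
    rw [card_eq_sum_outDeg]
    exact le_of_eq (Finset.sum_congr rfl fun v _ => (TT_apply A v).symm)
  obtain ⟨x, hx, hne⟩ := grid_lemma (TT A) (fun v => (L v).image (fun n : ℕ => (n : ℚ)))
    hLcard (Pol G A) hdeg (ne_of_gt (coeff_Pol_pos G Col i A hA hclass))
  choose ℓ hmem hcast using fun v => Finset.mem_image.mp (Fintype.mem_piFinset.mp hx v)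
  refine ⟨ℓ, hmem, ?_⟩
  have hxeq : x = fun u => ((ℓ u : ℚ)) := funext fun v => (hcast v).symm
  rw [eval_Pol, hxeq] at hne
  have hfac := Finset.prod_ne_zero_iff.mp hne
  intro v w hadj heq
  rcases (hA.1 v w).mp hadj with hvw | hwv
  · refine hfac (v, w) hvw ?_
    rw [sub_eq_zero]
    dsimp only
    exact_mod_cast heq.symm
  · refine hfac (w, v) hwv ?_
    rw [sub_eq_zero]
    dsimp only
    exact_mod_cast heq

end Core3

/-- A tripartite graph with an orientation such that one color class consists of simplicial
vertices of out-degree 0 admits an additive coloring from any lists of `d⁺_D(v) + 1` positive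
integers; in particular, from any lists of `Δ(G) + 1` positive integers. -/
theorem additive_coloring_tripartite {V : Type*} [Fintype V] [DecidableEq V]
    (G : SimpleGraph V) [DecidableRel G.Adj]
    (C : G.Coloring (Fin 3)) (i : Fin 3)
    (A : Finset (V × V)) (hA : IsOrientation G A)
    (hclass : ∀ v, C v = i → G.IsClique (G.neighborSet v) ∧ outDeg A v = 0) :
    (∀ L : V → Finset ℕ, (∀ v, ∀ k ∈ L v, 0 < k) →
      (∀ v, (L v).card = outDeg A v + 1) →
      ∃ ℓ : V → ℕ, (∀ v, ℓ v ∈ L v) ∧ IsAdditiveColoring G ℓ) ∧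
    (∀ L : V → Finset ℕ, (∀ v, ∀ k ∈ L v, 0 < k) →
      (∀ v, (L v).card = G.maxDegree + 1) →
      ∃ ℓ : V → ℕ, (∀ v, ℓ v ∈ L v) ∧ IsAdditiveColoring G ℓ) := by
  constructor
  · intro L _ hLc
    obtain ⟨ℓ, hmem, hprop⟩ := main_exists G C i A hA hclass L hLc
    exact ⟨ℓ, hmem, hprop⟩
  · intro L _ hLc
    have hout : ∀ v, outDeg A v + 1 ≤ (L v).card := by
      intro v
      rw [hLc v]
      have h1 : outDeg A v ≤ G.degree v := by
        rw [outDeg, SimpleGraph.degree]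
        refine Finset.card_le_card_of_injOn (fun p => p.2) ?_ ?_
        · intro p hp
          rw [Finset.mem_coe, Finset.mem_filter] at hp
          have hadj : G.Adj p.1 p.2 := (hA.1 _ _).mpr (Or.inl hp.1)
          rw [Finset.mem_coe, SimpleGraph.mem_neighborFinset, ← hp.2]
          exact hadj
        · intro p hp q hq hpq
          rw [Finset.coe_filter, Set.mem_setOf_eq] at hp hq
          exact Prod.ext (hp.2.trans hq.2.symm) hpq
      have h2 := G.degree_le_maxDegree v
      omega
    choose L0 hsub hL0card using fun v => Finset.exists_subset_card_eq (hout v)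
    obtain ⟨ℓ, hmem, hprop⟩ := main_exists G C i A hA hclass L0 hL0card
    exact ⟨ℓ, fun v => hsub v (hmem v), hprop⟩
end

section
/- If a digraph D' has an odd directed cycle built from γ-paths of W(D) as in the construction W(D) of an orientation D of a graph G, then G contains a closed walk of odd length, and hence an odd cycle. More precisely: if W(D) contains a directed cycle of odd length, then G contains an odd cycle. -/
open Finset MvPolynomial

section AuxOddCycle
open SimpleGraph

/-- In a path ending at `v`, any edge containing `v` is the last edge. -/
lemma path_last_edge {V : Type*} {G : SimpleGraph V} {v b : V} :
    ∀ {a : V} (p : G.Walk a v), p.IsPath → s(v, b) ∈ p.edges →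
      ∃ (q : G.Walk a b) (had : G.Adj b v), p = q.append (Walk.cons had Walk.nil) := by
  intro a p
  induction p with
  | nil => simp
  | @cons a y _ h' q ih =>
    intro hp h
    rw [Walk.edges_cons, List.mem_cons] at h
    rcases h with h | h
    · rw [Sym2.eq_iff] at h
      rcases h with ⟨h1, h2⟩ | ⟨h1, h2⟩
      · exfalso
        subst h1
        have hnd := hp.support_nodup
        rw [Walk.support_cons, List.nodup_cons] at hnd
        exact hnd.1 q.end_mem_support
      · subst h1
        subst h2
        have hq : q = Walk.nil := (Walk.isPath_iff_eq_nil (p := q)).mp hp.of_cons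
        subst hq
        exact ⟨Walk.nil, h', rfl⟩
    · obtain ⟨q', had, heq⟩ := ih hp.of_cons h
      exact ⟨Walk.cons h' q', had, by rw [heq, Walk.cons_append]⟩

/-- In a path `p` from `x` to `v`, if the edge `s(v,x)` occurs, then `p` has length 1. -/
lemma path_edge_endpoints {V : Type*} {G : SimpleGraph V} {x v : V} (p : G.Walk x v)
    (hp : p.IsPath) (h : s(v, x) ∈ p.edges) : p.length = 1 := by
  obtain ⟨q, had, rfl⟩ := path_last_edge p hp h
  have hq : q.IsPath := hp.of_append_left
  have : q = Walk.nil := (Walk.isPath_iff_eq_nil (p := q)).mp hq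
  subst this
  simp

/-- A closed walk of odd length yields an odd cycle. -/
lemma odd_cycle_of_odd_closed_walk {V : Type*} {G : SimpleGraph V} :
    ∀ (n : ℕ) (v : V) (w : G.Walk v v), w.length = n → Odd n →
      ∃ (u : V) (C : G.Walk u u), C.IsCycle ∧ Odd C.length := by
  intro n
  induction n using Nat.strong_induction_on with
  | _ n ih =>
    intro v w hl hodd
    by_cases hnod : w.support.tail.Nodup
    · -- the walk is itself a cycle
      cases w with
      | nil =>
        rw [← hl] at hodd
        simp [Nat.odd_iff] at hodd
      | @cons _ x _ h p =>
        rw [Walk.support_cons, List.tail_cons] at hnod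
        have hp : p.IsPath := (Walk.isPath_def p).mpr hnod
        have hlen : p.length ≠ 1 := by
          intro h1
          rw [Walk.length_cons, h1] at hl
          rw [← hl] at hodd
          norm_num [Nat.odd_iff] at hodd
        have hedge : s(v, x) ∉ p.edges := fun hmem =>
          hlen (path_edge_endpoints p hp hmem)
        exact ⟨v, Walk.cons h p, (Walk.cons_isCycle_iff p h).mpr ⟨hp, hedge⟩,
          hl ▸ hodd⟩
    · -- find a duplicated vertex, rotate and split
      classical
      obtain ⟨u, hu⟩ := List.exists_duplicate_iff_not_nodup.mpr hnod
      have hcount : 2 ≤ w.support.tail.count u := List.duplicate_iff_two_le_count.mp hu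
      have humem : u ∈ w.support := List.mem_of_mem_tail hu.mem
      set w' : G.Walk u u := w.rotate u humem with hw'
      have hlen' : w'.length = n := by
        have hts := congrArg Walk.length (w.take_spec humem)
        rw [Walk.length_append] at hts
        rw [hw', Walk.rotate, Walk.length_append, ← hl, ← hts]
        omega
      have hcount' : 2 ≤ w'.support.tail.count u := by
        have hrot := w.support_rotate u humem
        rwa [hrot.perm.count_eq]
      cases hw'' : w' with
      | nil =>
        rw [hw''] at hlen'
        rw [← hlen'] at hodd
        simp [Nat.odd_iff] at hodd
      | @cons _ x _ h p =>
        rw [hw''] at hcount'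
        rw [Walk.support_cons, List.tail_cons] at hcount'
        have hup : u ∈ p.support := List.count_pos_iff.mp (by omega)
        set q1 := p.takeUntil u hup with hq1
        set q2 := p.dropUntil u hup with hq2
        have hspec : q1.append q2 = p := p.take_spec hup
        have hlensum : q1.length + q2.length = p.length := by
          have := congrArg Walk.length hspec
          rwa [Walk.length_append] at this
        have hplen : p.length + 1 = n := by
          rw [← hlen', hw'', Walk.length_cons]
        have hq2len : 1 ≤ q2.length := by
          by_contra hq2n
          have h0 : q2.length = 0 := by omega
          have htail : q2.support.tail = [] := by
            apply List.eq_nil_of_length_eq_zero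
            have hls := q2.length_support
            simp [List.length_tail, hls, h0]
          have hone : List.count u p.support = 1 := by
            conv_lhs => rw [← hspec]
            rw [Walk.support_append, htail, List.append_nil]
            exact p.count_support_takeUntil_eq_one hup
          omega
        have hq2' : q2.length < n := by omega
        have hq1' : q1.length + 1 < n := by omega
        rcases Nat.even_or_odd q2.length with he | ho
        · have hoddc : Odd (q1.length + 1) := by
            rcases hodd with ⟨k, hk⟩
            rcases he with ⟨m, hm⟩
            exact ⟨k - m, by omega⟩
          exact ih (q1.length + 1) hq1' u (Walk.cons h q1)
            (by rw [Walk.length_cons]) hoddc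
        · exact ih q2.length hq2' u q2 rfl ho

/-- Projection from vertices of `W(D)` to vertices of `G`. -/
def Wproj {V : Type*} : WV V → V
  | Sum.inl x => x
  | Sum.inr (Sum.inl (_, x)) => x
  | Sum.inr (Sum.inr (e, _)) => e.2

/-- Indicator (in `ZMod 2`) of being a starred vertex. -/
def Wind {V : Type*} : WV V → ZMod 2
  | Sum.inl _ => 1
  | _ => 0

lemma arc_walk {V : Type*} [Fintype V] [DecidableEq V] {G : SimpleGraph V}
    {A : Finset (V × V)} (hA : IsOrientation G A) {a b : WV V}
    (hab : (a, b) ∈ WArcSet A) :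
    ∃ w : G.Walk (Wproj a) (Wproj b), (w.length : ZMod 2) = 1 + Wind a + Wind b := by
  simp only [WArcSet, Finset.mem_union, Finset.mem_image, Finset.mem_biUnion] at hab
  rcases hab with ((((⟨e, he, heq⟩ | ⟨e, he, x, hx, heq⟩) | ⟨e, he, x, hx, heq⟩) |
    ⟨e, he, x, hx, heq⟩) | ⟨e, he, x, hx, heq⟩)
  · cases heq
    exact ⟨Walk.nil, by simp [Wind, vstar, vsec]; show ((0 : ℕ) : ZMod 2) = 1 + 1; decide⟩
  · cases heq
    rw [Finset.mem_sdiff] at hx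
    have hx1 := hx.1
    simp only [nbr, Finset.mem_filter, Finset.mem_univ, true_and] at hx1
    have had : G.Adj e.1 x := (hA.1 _ _).mpr hx1
    exact ⟨had.toWalk, by simp [Wind, vsec, Adj.toWalk]; rfl⟩
  · cases heq
    rw [Finset.mem_sdiff] at hx
    have had : G.Adj e.1 e.2 := (hA.1 _ _).mpr (Or.inl (by simpa using he))
    exact ⟨had.toWalk, by simp [Wind, vsec, vmid, Adj.toWalk]; rfl⟩
  · cases heq
    rw [Finset.mem_sdiff] at hx
    have hx1 := hx.1
    simp only [nbr, Finset.mem_filter, Finset.mem_univ, true_and] at hx1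
    have had : G.Adj e.2 x := (hA.1 _ _).mpr hx1
    exact ⟨had.toWalk, by simp [Wind, vsec, vmid, Adj.toWalk]; rfl⟩
  · cases heq
    exact ⟨Walk.nil, by simp [Wind, vstar, vsec]; show ((0 : ℕ) : ZMod 2) = 1 + 1; decide⟩


end AuxOddCycle

/-- If `W(D)` contains a directed cycle of odd length, then `G` contains an odd cycle. -/
theorem odd_cycle_of_odd_dicycle_in_W {V : Type*} [Fintype V] [DecidableEq V]
    (G : SimpleGraph V) (A : Finset (V × V)) (hA : IsOrientation G A)
    (hcyc : ∃ n : ℕ, Odd n ∧ HasDicycleLen (WArcSet A) n) :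
    ∃ (v : V) (C : G.Walk v v), C.IsCycle ∧ Odd C.length := by
  
  classical
  obtain ⟨n, hodd, hn, c, hinj, harc⟩ := hcyc
  have h2 : ∀ z : ZMod 2, z + z = 0 := by decide
  have key : ∀ k : ℕ, ∃ w : G.Walk (Wproj (c 0)) (Wproj (c (k : ZMod n))),
      (w.length : ZMod 2) = (k : ZMod 2) + Wind (c 0) + Wind (c (k : ZMod n)) := by
    intro k
    induction k with
    | zero =>
      have h0 : ((0 : ℕ) : ZMod n) = 0 := Nat.cast_zero
      rw [h0]
      refine ⟨SimpleGraph.Walk.nil, ?_⟩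
      simp only [SimpleGraph.Walk.length_nil, Nat.cast_zero, zero_add]
      exact (h2 _).symm
    | succ k ihk =>
      obtain ⟨w, hw⟩ := ihk
      obtain ⟨s, hs⟩ := arc_walk hA (harc (k : ZMod n))
      have hcast : ((k + 1 : ℕ) : ZMod n) = (k : ZMod n) + 1 := by push_cast; ring
      rw [hcast]
      refine ⟨w.append s, ?_⟩
      rw [SimpleGraph.Walk.length_append, Nat.cast_add, hw, hs]
      push_cast
      linear_combination h2 (Wind (c (k : ZMod n)))
  obtain ⟨w, hw⟩ := key n
  have hWind : Wind (c ((n : ℕ) : ZMod n)) = Wind (c 0) := by rw [ZMod.natCast_self]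
  rw [hWind] at hw
  have hE : Wproj (c ((n : ℕ) : ZMod n)) = Wproj (c 0) := by rw [ZMod.natCast_self]
  have h1 : (n : ZMod 2) = 1 := by
    obtain ⟨k, rfl⟩ := hodd
    push_cast
    rw [show (2 : ZMod 2) = 0 by decide]
    ring
  have hfinal : ((w.copy rfl hE).length : ZMod 2) = 1 := by
    rw [SimpleGraph.Walk.length_copy, hw, h1, add_assoc, h2, add_zero]
  rcases Nat.even_or_odd (w.copy rfl hE).length with he | ho
  · exfalso
    obtain ⟨m, hm⟩ := he
    rw [hm] at hfinal
    push_cast at hfinal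
    rw [h2 (m : ZMod 2)] at hfinal
    exact absurd hfinal (by decide)
  · exact odd_cycle_of_odd_closed_walk _ _ (w.copy rfl hE) rfl ho
end
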